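/- arXiv:1301.4685 — 8 statements merged into one kernel-verified Lean document; each statement's English description precedes it below -/
import Mathlib

section
/- Let A be a commutative complex algebra carrying two uniform norms ‖·‖ and |·| (each a submultiplicative norm satisfying the square property). If (A,‖·‖) is a Q-algebra (its set of quasi-invertible elements is ‖·‖-open), then |x| ≤ ‖x‖ for all x ∈ A. -/
/-- `x` is quasi-invertible: there is `y` with `x ∘ y = y ∘ x = 0`
where `x ∘ y = x + y - x*y`. -/
def IsQuasiInv {A : Type*} [NonUnitalRing A] (x : A) : Prop :=
  ∃ y, x + y - x * y = 0 ∧ y + x - y * x = 0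

/-- `S` is open in the topology induced by the norm `N`. -/
def NormOpen {A : Type*} [AddGroup A] (N : A → ℝ) (S : Set A) : Prop :=
  ∀ x ∈ S, ∃ ε > 0, ∀ y, N (y - x) < ε → y ∈ S

/-- A uniform norm: a submultiplicative norm satisfying the square property. -/
structure IsUniformNorm {A : Type*} [NonUnitalRing A] [Module ℂ A] (N : A → ℝ) : Prop where
  eq_zero_iff : ∀ x, N x = 0 ↔ x = 0
  add_le : ∀ x y, N (x + y) ≤ N x + N y
  smul_eq : ∀ (c : ℂ) (x : A), N (c • x) = ‖c‖ * N x
  mul_le : ∀ x y, N (x * y) ≤ N x * N y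
  sq_eq : ∀ x, N (x * x) = N x * N x

open Unitization

section Aux
variable {A : Type*} [NonUnitalCommRing A] [Module ℂ A]
    [SMulCommClass ℂ A A] [IsScalarTower ℂ A A]

lemma one_sub_inr_mul (x y : A) :
    (1 - (x : Unitization ℂ A)) * (1 - (y : Unitization ℂ A))
      = 1 - ((x + y - x * y : A) : Unitization ℂ A) := by
  rw [sub_eq_add_neg (x + y), ← neg_mul, inr_add, inr_add, inr_mul, inr_neg]
  ring

lemma isQuasiInv_iff_isUnit (x : A) :
    IsQuasiInv x ↔ IsUnit (1 - (x : Unitization ℂ A)) := by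
  constructor
  · rintro ⟨y, h1, _⟩
    refine IsUnit.of_mul_eq_one (1 - (y : Unitization ℂ A)) ?_
    rw [one_sub_inr_mul, h1]
    simp
  · rintro ⟨u, hu⟩
    set v : Unitization ℂ A := ↑u⁻¹ with hv
    have huv : (1 - (x : Unitization ℂ A)) * v = 1 := by rw [← hu]; exact u.mul_inv
    have hfst : v.fst = 1 := by
      have h : ((1 - (x : Unitization ℂ A)) * v).fst = (1 : Unitization ℂ A).fst :=
        congrArg (fun z : Unitization ℂ A => z.fst) huv
      rw [fst_mul, sub_eq_add_neg, fst_add, fst_one, fst_neg, fst_inr,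
        neg_zero, add_zero, one_mul] at h
      exact h
    set y : A := -(v.snd) with hy
    have hvy : v = 1 - (y : Unitization ℂ A) := by
      have hvv := inl_fst_add_inr_snd_eq v
      rw [hfst] at hvv
      rw [← hvv, hy, inr_neg, sub_neg_eq_add, inl_one]
    rw [hvy, one_sub_inr_mul] at huv
    have h0 : ((x + y - x * y : A) : Unitization ℂ A) = 0 := sub_eq_self.mp huv
    have h1 : x + y - x * y = 0 := inr_injective (R := ℂ) (by rw [h0, inr_zero])
    exact ⟨y, h1, by rw [add_comm y x, mul_comm y x]; exact h1⟩

lemma qi_of_sq {x : A} (h : IsQuasiInv (x * x)) : IsQuasiInv x := by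
  rw [isQuasiInv_iff_isUnit] at h ⊢
  rw [inr_mul] at h
  have he : (1 - (x : Unitization ℂ A) * x) = (1 - x) * (1 + x) := by ring
  rw [he] at h
  exact isUnit_of_mul_isUnit_left h

/-- iterated squaring -/
private def sqit (x : A) : ℕ → A := fun k => (fun a => a * a)^[k] x

lemma sqit_zero (x : A) : sqit x 0 = x := rfl

lemma sqit_succ (x : A) (k : ℕ) : sqit x (k + 1) = sqit x k * sqit x k :=
  Function.iterate_succ_apply' _ _ _

lemma norm_nonneg_of_uniform {N : A → ℝ} (hN : IsUniformNorm N) (a : A) : 0 ≤ N a := by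
  have h0 : N 0 = 0 := (hN.eq_zero_iff 0).mpr rfl
  have hneg : N (-a) = N a := by
    rw [← neg_one_smul ℂ a, hN.smul_eq]; simp
  have := hN.add_le a (-a)
  rw [add_neg_cancel, h0, hneg] at this
  linarith

lemma norm_sqit {N : A → ℝ} (hN : IsUniformNorm N) (x : A) (k : ℕ) :
    N (sqit x k) = N x ^ 2 ^ k := by
  induction k with
  | zero => simp [sqit_zero]
  | succ k ih =>
    rw [sqit_succ, hN.sq_eq, ih, ← pow_add, pow_succ, mul_two]

lemma qi_sqit {x : A} (k : ℕ) (h : IsQuasiInv (sqit x k)) : IsQuasiInv x := by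
  induction k with
  | zero => rwa [sqit_zero] at h
  | succ k ih =>
    rw [sqit_succ] at h
    exact ih (qi_of_sq h)

lemma qi_of_norm_lt_one {N : A → ℝ} (hN : IsUniformNorm N)
    (hQ : NormOpen N {x | IsQuasiInv x}) {x : A} (hx : N x < 1) : IsQuasiInv x := by
  obtain ⟨ε, hε, hball⟩ := hQ 0 ⟨0, by simp⟩
  rcases eq_or_ne x 0 with rfl | hx0
  · exact ⟨0, by simp⟩
  · have hNpos : 0 ≤ N x := norm_nonneg_of_uniform hN x
    obtain ⟨n, hn⟩ := exists_pow_lt_of_lt_one hε hx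
    have h2n : N x ^ 2 ^ n ≤ N x ^ n :=
      pow_le_pow_of_le_one hNpos hx.le Nat.lt_two_pow_self.le
    refine qi_sqit n (hball (sqit x n) ?_)
    rw [sub_zero, norm_sqit hN]
    exact lt_of_le_of_lt h2n hn

end Aux

section Key

variable {A' : Type*} [NonUnitalNormedCommRing A'] [NormedSpace ℂ A']
    [SMulCommClass ℂ A' A'] [IsScalarTower ℂ A' A']

noncomputable local instance : NormedCommRing (WithLp 1 (Unitization ℂ A')) :=
  { (inferInstance : NormedRing (WithLp 1 (Unitization ℂ A'))) with
    mul_comm := fun a b =>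
      (WithLp.unitizationAlgEquiv (𝕜 := ℂ) (A := A') ℂ).injective (by simp [map_mul, mul_comm]) }

/-- Key analytic lemma: if every `lam⁻¹ • x` with `r < ‖lam‖` is quasi-invertible and the
norm satisfies the square property, then `‖x‖ ≤ r`. -/
lemma key_norm_le (hsq : ∀ a : A', ‖a * a‖ = ‖a‖ * ‖a‖) (x : A') {r : ℝ} (hr : 0 ≤ r)
    (h : ∀ lam : ℂ, r < ‖lam‖ → IsQuasiInv (lam⁻¹ • x)) : ‖x‖ ≤ r := by
  by_contra hcon
  push_neg at hcon
  let E : Unitization ℂ A' ≃ₐ[ℂ] WithLp 1 (Unitization ℂ A') :=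
    (WithLp.unitizationAlgEquiv (𝕜 := ℂ) (A := A') ℂ).symm
  let φ : WithLp 1 (Unitization ℂ A') →+* UniformSpace.Completion (WithLp 1 (Unitization ℂ A')) :=
    UniformSpace.Completion.coeRingHom
  let j : A' → WithLp 1 (Unitization ℂ A') := fun a => E ↑a
  have hjnorm : ∀ a : A', ‖φ (j a)‖ = ‖a‖ := by
    intro a
    rw [show φ (j a) = ↑(j a) from rfl, UniformSpace.Completion.norm_coe]
    exact WithLp.unitization_norm_inr a
  have hjmul : ∀ a b : A', j (a * b) = j a * j b := by
    intro a b
    show E ↑(a * b) = E ↑a * E ↑b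
    rw [Unitization.inr_mul, map_mul]
  set a : UniformSpace.Completion (WithLp 1 (Unitization ℂ A')) := φ (j x) with ha
  have hpowB : ∀ k : ℕ, (j x) ^ (2 ^ k) = j (sqit x k) := by
    intro k
    induction k with
    | zero => simp [sqit_zero]
    | succ k ih =>
      rw [pow_succ 2 k, pow_mul, pow_two, ih, ← hjmul, ← sqit_succ]
  have hNx : IsUniformNorm (fun a : A' => ‖a‖) :=
    { eq_zero_iff := fun x => norm_eq_zero
      add_le := fun x y => norm_add_le x y
      smul_eq := fun c x => norm_smul c x
      mul_le := fun x y => norm_mul_le x y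
      sq_eq := hsq }
  have hnorma : ∀ k : ℕ, ‖a ^ 2 ^ k‖₊ = ‖a‖₊ ^ 2 ^ k := by
    intro k
    ext
    push_cast
    rw [ha, ← map_pow, hpowB, hjnorm, hjnorm]
    exact norm_sqit hNx x k
  -- Gelfand's formula: the spectral radius equals ‖a‖
  have hG := (spectrum.pow_nnnorm_pow_one_div_tendsto_nhds_spectralRadius a).comp
      (tendsto_pow_atTop_atTop_of_one_lt (one_lt_two))
  have heq : (fun k : ℕ => (‖a ^ 2 ^ k‖₊ : ENNReal) ^ (1 / (2 ^ k : ℕ) : ℝ))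
      = fun _ => (‖a‖₊ : ENNReal) := by
    funext k
    rw [hnorma, ENNReal.coe_pow, ← ENNReal.rpow_natCast, ← ENNReal.rpow_mul]
    rw [show ((2 ^ k : ℕ) : ℝ) * (1 / (2 ^ k : ℕ) : ℝ) = 1 by
      have : ((2 ^ k : ℕ) : ℝ) ≠ 0 := by positivity
      field_simp]
    exact ENNReal.rpow_one _
  rw [show ((fun n : ℕ => (‖a ^ n‖₊ : ENNReal) ^ (1 / n : ℝ)) ∘ fun k => 2 ^ k)
      = fun k : ℕ => (‖a ^ 2 ^ k‖₊ : ENNReal) ^ (1 / (2 ^ k : ℕ) : ℝ) from rfl, heq] at hG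
  have hrad : spectralRadius ℂ a = (‖a‖₊ : ENNReal) :=
    tendsto_nhds_unique hG tendsto_const_nhds
  -- find a spectral value of modulus > r
  have hlt : (r.toNNReal : ENNReal) < spectralRadius ℂ a := by
    rw [hrad]
    rw [ENNReal.coe_lt_coe]
    rw [← NNReal.coe_lt_coe, Real.coe_toNNReal r hr, coe_nnnorm]
    rw [hjnorm]
    exact hcon
  obtain ⟨lam, hmem, hlam⟩ : ∃ l ∈ spectrum ℂ a, (r.toNNReal : ENNReal) < ‖l‖₊ := by
    simpa [spectralRadius, lt_iSup_iff] using hlt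
  have hrlam : r < ‖lam‖ := by
    rw [ENNReal.coe_lt_coe, ← NNReal.coe_lt_coe, Real.coe_toNNReal r hr, coe_nnnorm] at hlam
    exact hlam
  have hlam0 : lam ≠ 0 := by
    intro h0
    rw [h0, norm_zero] at hrlam
    exact absurd hrlam (not_lt.mpr hr)
  -- but then `lam • 1 - x` is invertible, a contradiction
  have hqi : IsQuasiInv (lam⁻¹ • x) := h lam hrlam
  have hUnit : IsUnit (1 - ((lam⁻¹ • x : A') : Unitization ℂ A')) :=
    (isQuasiInv_iff_isUnit _).mp hqi
  have hfact : algebraMap ℂ (Unitization ℂ A') lam - ↑x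
      = algebraMap ℂ (Unitization ℂ A') lam * (1 - ↑(lam⁻¹ • x : A')) := by
    rw [mul_sub, mul_one, ← Algebra.smul_def, Unitization.inr_smul, smul_smul,
      mul_inv_cancel₀ hlam0, one_smul]
  have hu : IsUnit (algebraMap ℂ (Unitization ℂ A') lam - ↑x) := by
    rw [hfact]
    exact ((isUnit_iff_ne_zero.mpr hlam0).map (algebraMap ℂ (Unitization ℂ A'))).mul hUnit
  have hmap : (algebraMap ℂ _ lam - a) = φ (E (algebraMap ℂ (Unitization ℂ A') lam - ↑x)) := by
    rw [map_sub, map_sub, AlgEquiv.commutes, ha, UniformSpace.Completion.algebraMap_def]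
    rfl
  exact spectrum.mem_iff.mp hmem (hmap ▸ ((hu.map E.toAlgHom.toRingHom).map φ))

end Key

/-- Type synonym to carry the norm `q`. -/
private def UNorm {A : Type*} (_q : A → ℝ) : Type _ := A

/-- If `(A, N)` is a uniform normed Q-algebra and `q` is a uniform norm on `A`,
then `q x ≤ N x` for all `x`. -/
theorem uniform_norm_le_of_qAlgebra {A : Type*} [NonUnitalCommRing A] [Module ℂ A]
    [SMulCommClass ℂ A A] [IsScalarTower ℂ A A]
    (N q : A → ℝ) (hN : IsUniformNorm N) (hq : IsUniformNorm q)
    (hQ : NormOpen N {x | IsQuasiInv x}) :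
    ∀ x, q x ≤ N x := by
  intro x
  letI iR : NonUnitalCommRing (UNorm q) := inferInstanceAs (NonUnitalCommRing A)
  letI : Module ℂ (UNorm q) := inferInstanceAs (Module ℂ A)
  letI : SMulCommClass ℂ (UNorm q) (UNorm q) := inferInstanceAs (SMulCommClass ℂ A A)
  letI : IsScalarTower ℂ (UNorm q) (UNorm q) := inferInstanceAs (IsScalarTower ℂ A A)
  letI iG : NormedAddCommGroup (UNorm q) := AddGroupNorm.toNormedAddCommGroup
    { toFun := fun a => q a
      map_zero' := (hq.eq_zero_iff 0).mpr rfl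
      add_le' := hq.add_le
      neg' := fun a => by
        show q (-a) = q a
        have key : ∀ b : A, q (-b) = q b := fun b => by
          rw [← neg_one_smul ℂ b, hq.smul_eq]; simp
        exact key a
      eq_zero_of_map_eq_zero' := fun a h => (hq.eq_zero_iff a).mp h }
  letI : NonUnitalNormedCommRing (UNorm q) :=
    { iG, iR with
      dist_eq := fun a b => rfl
      norm_mul_le := hq.mul_le
      mul_comm := mul_comm }
  letI : NormedSpace ℂ (UNorm q) := ⟨fun c a => le_of_eq (hq.smul_eq c a)⟩
  have hN0 : 0 ≤ N x := norm_nonneg_of_uniform hN x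
  have harg : ∀ lam : ℂ, N x < ‖lam‖ → IsQuasiInv (lam⁻¹ • (x : UNorm q)) := by
    intro lam hlam
    have hlam0 : lam ≠ 0 := by
      intro h0
      rw [h0, norm_zero] at hlam
      exact absurd hlam (not_lt.mpr hN0)
    have hlt1 : N (lam⁻¹ • x) < 1 := by
      rw [hN.smul_eq, norm_inv]
      rw [inv_mul_lt_one₀ (lt_of_le_of_lt hN0 hlam)]
      exact hlam
    exact qi_of_norm_lt_one hN hQ hlt1
  exact key_norm_le (A' := UNorm q) (fun a => hq.sq_eq a) (x : UNorm q) hN0 harg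
end

section
/- Let A be a commutative complex algebra and let ‖·‖ and |·| be two uniform norms on A such that both (A,‖·‖) and (A,|·|) are Q-algebras. Then ‖x‖ = |x| for all x ∈ A; i.e., a uniform normed Q-algebra admits exactly one uniform Q-algebra norm. -/
namespace UQAux

open Filter UniformSpace

set_option linter.unusedSectionVars false

variable {A : Type*} [NonUnitalCommRing A] [Module ℂ A]
    [SMulCommClass ℂ A A] [IsScalarTower ℂ A A]

/-- iterated squaring -/
def sqit : ℕ → A → A
  | 0, x => x
  | (k+1), x => sqit k x * sqit k x

theorem inr_sqit (k : ℕ) (x : A) :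
    ((sqit k x : A) : Unitization ℂ A) = ((x : Unitization ℂ A)) ^ (2 ^ k) := by
  induction k with
  | zero => simp [sqit]
  | succ k ih =>
    rw [sqit, Unitization.inr_mul, ih, ← pow_add, pow_succ, mul_two]

theorem isQuasiInv_iff_isUnit (x : A) :
    IsQuasiInv x ↔ IsUnit ((1 : Unitization ℂ A) - x) := by
  constructor
  · rintro ⟨y, h1, _⟩
    refine IsUnit.of_mul_eq_one (1 - (y : Unitization ℂ A)) ?_
    have h0 : ((x + y - x * y : A) : Unitization ℂ A) = 0 := by rw [h1]; simp
    rw [Unitization.inr_sub, Unitization.inr_add, Unitization.inr_mul] at h0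
    linear_combination -h0
  · intro hu
    obtain ⟨u, hu⟩ := hu
    have hmul : (↑u⁻¹ : Unitization ℂ A) * (1 - (x : Unitization ℂ A)) = 1 := by
      rw [← hu]; exact u.inv_mul
    have hfst : (↑u⁻¹ : Unitization ℂ A).fst = 1 := by
      have := congrArg (fun b : Unitization ℂ A => b.fst) hmul
      simpa [Unitization.fst_mul, sub_eq_add_neg, Unitization.fst_add, Unitization.fst_neg,
        Unitization.fst_one, Unitization.fst_inr] using this
    set b : A := (↑u⁻¹ : Unitization ℂ A).snd with hb
    have hrep : (↑u⁻¹ : Unitization ℂ A) = 1 + (b : Unitization ℂ A) := by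
      conv_lhs => rw [← Unitization.inl_fst_add_inr_snd_eq (↑u⁻¹ : Unitization ℂ A)]
      rw [hfst, ← hb, Unitization.inl_one]
    rw [hrep] at hmul
    have hA : b - x - x * b = 0 := by
      apply Unitization.inr_injective (R := ℂ)
      rw [Unitization.inr_sub, Unitization.inr_sub, Unitization.inr_mul, Unitization.inr_zero]
      linear_combination hmul
    refine ⟨-b, ?_, ?_⟩
    · calc x + -b - x * -b = -(b - x - x * b) := by rw [mul_neg]; abel
        _ = 0 := by rw [hA, neg_zero]
    · calc -b + x - -b * x = -(b - x - x * b) := by rw [neg_mul, mul_comm b x]; abel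
        _ = 0 := by rw [hA, neg_zero]

theorem isQuasiInv_of_sqit {k : ℕ} {x : A} (h : IsQuasiInv (sqit k x)) : IsQuasiInv x := by
  rw [isQuasiInv_iff_isUnit] at h ⊢
  rw [inr_sqit] at h
  refine isUnit_of_dvd_unit ?_ h
  simpa using sub_dvd_pow_sub_pow (1 : Unitization ℂ A) (x : Unitization ℂ A) (2 ^ k)

variable {N : A → ℝ}

theorem nonneg (hN : IsUniformNorm N) (x : A) : 0 ≤ N x := by
  have h0 : N 0 = 0 := (hN.eq_zero_iff 0).mpr rfl
  have hneg : N (-x) = N x := by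
    rw [← neg_one_smul ℂ x, hN.smul_eq]; simp
  have h1 := hN.add_le x (-x)
  rw [add_neg_cancel, h0, hneg] at h1
  linarith

theorem N_sqit (hN : IsUniformNorm N) (k : ℕ) (x : A) : N (sqit k x) = N x ^ (2 ^ k) := by
  induction k with
  | zero => simp [sqit]
  | succ k ih =>
    rw [sqit, hN.sq_eq, ih, ← pow_add, pow_succ, mul_two]

theorem lower (hN : IsUniformNorm N) (hQN : NormOpen N {x | IsQuasiInv x})
    (x : A) (l : ℂ) (h : N x < ‖l‖) : IsQuasiInv ((l⁻¹ : ℂ) • x) := by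
  obtain ⟨ε, hε, hball⟩ := hQN 0 ⟨0, by simp, by simp⟩
  set y := (l⁻¹ : ℂ) • x with hy
  have hNx0 : 0 ≤ N x := nonneg hN x
  have hl : (0:ℝ) < ‖l‖ := lt_of_le_of_lt hNx0 h
  have hy1 : N y < 1 := by
    rw [hy, hN.smul_eq, norm_inv]
    rw [inv_mul_lt_iff₀ hl, mul_one]
    exact h
  have hy0 : 0 ≤ N y := nonneg hN y
  obtain ⟨n, hn⟩ := exists_pow_lt_of_lt_one hε hy1
  have hkey : N (sqit n y) < ε := by
    rw [N_sqit hN]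
    exact lt_of_le_of_lt (pow_le_pow_of_le_one hy0 hy1.le (Nat.lt_two_pow_self (n := n)).le) hn
  have qi : IsQuasiInv (sqit n y) := hball _ (by rwa [sub_zero])
  exact isQuasiInv_of_sqit qi

theorem upper (hN : IsUniformNorm N) (x : A) (s : ℝ) (hs : 0 < s)
    (h : ∀ l : ℂ, s ≤ ‖l‖ → IsQuasiInv ((l⁻¹ : ℂ) • x)) : N x ≤ s := by
  letI : NormedAddCommGroup (Unitization ℂ A) := AddGroupNorm.toNormedAddCommGroup
    { toFun := fun b => ‖b.fst‖ + N b.snd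
      map_zero' := by simp [(hN.eq_zero_iff 0).mpr rfl]
      add_le' := fun b c => by
        have h1 := norm_add_le b.fst c.fst
        have h2 := hN.add_le b.snd c.snd
        simp only [Unitization.fst_add, Unitization.snd_add]
        linarith
      neg' := fun b => by
        have hneg : N (-b.snd) = N b.snd := by
          rw [← neg_one_smul ℂ b.snd, hN.smul_eq]; simp
        simp [Unitization.fst_neg, Unitization.snd_neg, hneg]
      eq_zero_of_map_eq_zero' := fun b hb => by
        have hb' : ‖b.fst‖ + N b.snd = 0 := hb
        have h1 : ‖b.fst‖ = 0 := by linarith [norm_nonneg b.fst, nonneg hN b.snd]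
        have h2 : N b.snd = 0 := by linarith [norm_nonneg b.fst, nonneg hN b.snd]
        exact Unitization.ext (norm_eq_zero.mp h1) ((hN.eq_zero_iff _).mp h2) }
  have hnorm : ∀ b : Unitization ℂ A, ‖b‖ = ‖b.fst‖ + N b.snd := fun _ => rfl
  letI : NormedCommRing (Unitization ℂ A) :=
    { (inferInstance : NormedAddCommGroup (Unitization ℂ A)),
      (inferInstance : CommRing (Unitization ℂ A)) with
      norm_mul_le := fun b c => by
        rw [hnorm, hnorm, hnorm, Unitization.fst_mul, Unitization.snd_mul]
        have h1 := hN.add_le (b.fst • c.snd + c.fst • b.snd) (b.snd * c.snd)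
        have h2 := hN.add_le (b.fst • c.snd) (c.fst • b.snd)
        have h3 := hN.mul_le b.snd c.snd
        have h4 : N (b.fst • c.snd) = ‖b.fst‖ * N c.snd := hN.smul_eq _ _
        have h5 : N (c.fst • b.snd) = ‖c.fst‖ * N b.snd := hN.smul_eq _ _
        have h6 : ‖b.fst * c.fst‖ = ‖b.fst‖ * ‖c.fst‖ := norm_mul _ _
        nlinarith [norm_nonneg b.fst, norm_nonneg c.fst, nonneg hN b.snd, nonneg hN c.snd] }
  letI : NormedAlgebra ℂ (Unitization ℂ A) :=
    { (inferInstance : Algebra ℂ (Unitization ℂ A)) with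
      norm_smul_le := fun c b => by
        rw [hnorm, hnorm, Unitization.fst_smul, Unitization.snd_smul, hN.smul_eq,
          smul_eq_mul, norm_mul]
        ring_nf
        exact le_refl _ }
  let e : Unitization ℂ A →+* Completion (Unitization ℂ A) := Completion.coeRingHom
  set a : Completion (Unitization ℂ A) := ((x : Unitization ℂ A) : Completion (Unitization ℂ A))
    with ha
  have hspec : ∀ l ∈ spectrum ℂ a, ‖l‖ ≤ s := by
    intro l hl
    by_contra hls
    push_neg at hls
    have hsl : s ≤ ‖l‖ := le_of_lt hls
    have hl0 : l ≠ 0 := by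
      intro h0
      rw [h0, norm_zero] at hls
      linarith
    have hqi := h l hsl
    rw [isQuasiInv_iff_isUnit] at hqi
    have hunit : IsUnit (algebraMap ℂ (Unitization ℂ A) l - (x : Unitization ℂ A)) := by
      have heq : algebraMap ℂ (Unitization ℂ A) l - (x : Unitization ℂ A)
          = l • ((1 : Unitization ℂ A) - (((l⁻¹ : ℂ) • x : A) : Unitization ℂ A)) := by
        rw [smul_sub, Unitization.inr_smul, smul_smul, mul_inv_cancel₀ hl0, one_smul,
          Algebra.algebraMap_eq_smul_one]
      rw [heq, Algebra.smul_def]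
      exact (hl0.isUnit.map (algebraMap ℂ (Unitization ℂ A))).mul hqi
    have hnotmem : l ∉ spectrum ℂ a := by
      rw [spectrum.notMem_iff]
      have heq2 : algebraMap ℂ (Completion (Unitization ℂ A)) l - a
          = e (algebraMap ℂ (Unitization ℂ A) l - (x : Unitization ℂ A)) := by
        rw [map_sub, Completion.algebraMap_def]
        rfl
      rw [heq2]
      exact hunit.map e
    exact hnotmem hl
  have hrad : spectralRadius ℂ a ≤ ENNReal.ofReal s := by
    rw [spectralRadius]
    refine iSup₂_le fun l hl => ?_
    rw [← enorm_eq_nnnorm, ← ofReal_norm]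
    exact ENNReal.ofReal_le_ofReal (hspec l hl)
  have hg := spectrum.pow_nnnorm_pow_one_div_tendsto_nhds_spectralRadius a
  have hmono : Tendsto (fun k : ℕ => 2 ^ k) atTop atTop :=
    tendsto_atTop_mono (fun k => (Nat.lt_two_pow_self (n := k)).le) tendsto_id
  have hg2 := hg.comp hmono
  have hconst : ((fun n : ℕ => (‖a ^ n‖₊ : ENNReal) ^ (1 / n : ℝ)) ∘ fun k : ℕ => 2 ^ k)
      = fun _ : ℕ => ENNReal.ofReal (N x) := by
    funext k
    show (‖a ^ 2 ^ k‖₊ : ENNReal) ^ (1 / (2 ^ k : ℕ) : ℝ) = ENNReal.ofReal (N x)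
    have hak : a ^ 2 ^ k = (((sqit k x : A) : Unitization ℂ A) : Completion (Unitization ℂ A)) := by
      rw [inr_sqit, ha]
      exact (map_pow e _ _).symm
    have hnn : (‖a ^ 2 ^ k‖₊ : ENNReal) = ENNReal.ofReal (N x ^ 2 ^ k) := by
      rw [hak, ← enorm_eq_nnnorm, ← ofReal_norm, Completion.norm_coe, hnorm]
      simp [Unitization.fst_inr, Unitization.snd_inr, N_sqit hN]
    have h2k : ((2 ^ k : ℕ) : ℝ) ≠ 0 := by positivity
    rw [hnn, ENNReal.ofReal_pow (nonneg hN x), ← ENNReal.rpow_natCast, ← ENNReal.rpow_mul,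
      mul_one_div_cancel h2k, ENNReal.rpow_one]
  rw [hconst] at hg2
  have hlim : ENNReal.ofReal (N x) = spectralRadius ℂ a :=
    tendsto_nhds_unique tendsto_const_nhds hg2
  rw [← ENNReal.ofReal_le_ofReal_iff hs.le, hlim]
  exact hrad

end UQAux

/-- If `N` and `q` are two uniform norms on `A` each making `A` a Q-algebra,
then `N = q`: a uniform normed Q-algebra admits exactly one uniform Q-algebra norm. -/
theorem uniform_qAlgebra_norm_unique {A : Type*} [NonUnitalCommRing A] [Module ℂ A]
    [SMulCommClass ℂ A A] [IsScalarTower ℂ A A]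
    (N q : A → ℝ) (hN : IsUniformNorm N) (hq : IsUniformNorm q)
    (hQN : NormOpen N {x | IsQuasiInv x}) (hQq : NormOpen q {x | IsQuasiInv x}) :
    ∀ x, N x = q x := by
  have key : ∀ (N₁ N₂ : A → ℝ), IsUniformNorm N₁ → IsUniformNorm N₂ →
      NormOpen N₂ {x | IsQuasiInv x} → ∀ x, N₁ x ≤ N₂ x := by
    intro N₁ N₂ h₁ h₂ hQ₂ x
    by_contra hc
    push_neg at hc
    set s := (N₂ x + N₁ x) / 2 with hs
    have hspos : 0 < s := by
      have := UQAux.nonneg h₂ x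
      rw [hs]; linarith
    have hub : N₁ x ≤ s := by
      refine UQAux.upper h₁ x s hspos fun l hl => ?_
      refine UQAux.lower h₂ hQ₂ x l ?_
      calc N₂ x < s := by rw [hs]; linarith
        _ ≤ ‖l‖ := hl
    rw [hs] at hub
    linarith
  intro x
  exact le_antisymm (key N q hN hq hQq x) (key q N hq hN hQN x)
end

section
/- Let A be a commutative complex Hausdorff topological algebra whose topology is induced by a family {p_u : u ∈ U} of uniform seminorms, and suppose the set M(A) of nonzero continuous multiplicative linear functionals on A is equicontinuous. Then q(x) = sup{|f(x)| : f ∈ M(A)} defines a uniform norm on A which induces the topology of A; in particular A is a uniform normed algebra. -/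
/-- A submultiplicative seminorm bundled with its submultiplicativity proof. -/
structure SubmulSeminorm (A : Type*) [AddCommGroup A] [Mul A] [SMul ℂ A] where
  p : Seminorm ℂ A
  mul_le : ∀ x y, p (x * y) ≤ p x * p y

section UnifAlg

set_option linter.unusedSectionVars false

variable {A : Type*} [NonUnitalCommRing A] [Module ℂ A] [SMulCommClass ℂ A A]
  [IsScalarTower ℂ A A]

/-- Type synonym for the unitization of `A`, normed using a given submultiplicative
seminorm on `A`. -/
def UnifAlg (_q : SubmulSeminorm A) : Type _ := Unitization ℂ A

namespace UnifAlg

variable (q : SubmulSeminorm A)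

instance : CommRing (UnifAlg q) := inferInstanceAs (CommRing (Unitization ℂ A))
instance : Algebra ℂ (UnifAlg q) := inferInstanceAs (Algebra ℂ (Unitization ℂ A))

/-- Identity map to the underlying unitization. -/
def toU (u : UnifAlg q) : Unitization ℂ A := u
/-- Identity map from the underlying unitization. -/
def ofU (u : Unitization ℂ A) : UnifAlg q := u

@[simp] lemma toU_ofU (u : Unitization ℂ A) : toU q (ofU q u) = u := rfl
@[simp] lemma ofU_toU (u : UnifAlg q) : ofU q (toU q u) = u := rfl
@[simp] lemma toU_add (u v : UnifAlg q) : toU q (u + v) = toU q u + toU q v := rfl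
@[simp] lemma toU_zero : toU q 0 = 0 := rfl
@[simp] lemma toU_one : toU q 1 = 1 := rfl
@[simp] lemma toU_neg (u : UnifAlg q) : toU q (-u) = -(toU q u) := rfl
@[simp] lemma toU_mul (u v : UnifAlg q) : toU q (u * v) = toU q u * toU q v := rfl
@[simp] lemma toU_smul (c : ℂ) (u : UnifAlg q) : toU q (c • u) = c • toU q u := rfl
@[simp] lemma ofU_mul (u v : Unitization ℂ A) : ofU q (u * v) = ofU q u * ofU q v := rfl
@[simp] lemma ofU_pow (u : Unitization ℂ A) (n : ℕ) : ofU q (u ^ n) = (ofU q u) ^ n := by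
  induction n with
  | zero => rfl
  | succ n ih => rw [pow_succ, pow_succ, ofU_mul, ih]

/-- The seminorm on the unitization. -/
noncomputable def gnorm : AddGroupSeminorm (UnifAlg q) where
  toFun u := ‖(toU q u).fst‖ + q.p (toU q u).snd
  map_zero' := by simp
  add_le' u v := by
    simp only [toU_add, Unitization.fst_add, Unitization.snd_add]
    have h1 := norm_add_le (toU q u).fst (toU q v).fst
    have h2 := map_add_le_add q.p (toU q u).snd (toU q v).snd
    linarith
  neg' u := by simp

noncomputable instance : SeminormedAddCommGroup (UnifAlg q) :=
  AddGroupSeminormClass.toSeminormedAddCommGroup (gnorm q)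

lemma norm_def (u : UnifAlg q) : ‖u‖ = ‖(toU q u).fst‖ + q.p (toU q u).snd := rfl

noncomputable instance : SeminormedCommRing (UnifAlg q) where
  __ : SeminormedAddCommGroup (UnifAlg q) := inferInstance
  __ : CommRing (UnifAlg q) := inferInstance
  norm_mul_le u v := by
    rw [norm_def, norm_def, norm_def, toU_mul]
    have hm : (toU q u * toU q v).fst = (toU q u).fst * (toU q v).fst :=
      Unitization.fst_mul _ _
    have hs : (toU q u * toU q v).snd =
        (toU q u).fst • (toU q v).snd + (toU q v).fst • (toU q u).snd
          + (toU q u).snd * (toU q v).snd := Unitization.snd_mul _ _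
    rw [hm, hs]
    have h1 := map_add_le_add q.p ((toU q u).fst • (toU q v).snd + (toU q v).fst • (toU q u).snd)
      ((toU q u).snd * (toU q v).snd)
    have h2 := map_add_le_add q.p ((toU q u).fst • (toU q v).snd)
      ((toU q v).fst • (toU q u).snd)
    have h3 : q.p ((toU q u).fst • (toU q v).snd) = ‖(toU q u).fst‖ * q.p (toU q v).snd :=
      map_smul_eq_mul _ _ _
    have h4 : q.p ((toU q v).fst • (toU q u).snd) = ‖(toU q v).fst‖ * q.p (toU q u).snd :=
      map_smul_eq_mul _ _ _
    have h5 := q.mul_le (toU q u).snd (toU q v).snd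
    have h6 : ‖(toU q u).fst * (toU q v).fst‖ = ‖(toU q u).fst‖ * ‖(toU q v).fst‖ :=
      norm_mul _ _
    have hp1 : (0 : ℝ) ≤ q.p (toU q u).snd := apply_nonneg _ _
    have hp2 : (0 : ℝ) ≤ q.p (toU q v).snd := apply_nonneg _ _
    have hn1 : (0 : ℝ) ≤ ‖(toU q u).fst‖ := norm_nonneg _
    have hn2 : (0 : ℝ) ≤ ‖(toU q v).fst‖ := norm_nonneg _
    nlinarith

noncomputable instance : NormedAlgebra ℂ (UnifAlg q) where
  norm_smul_le c u := by
    rw [norm_def, norm_def, toU_smul]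
    have h1 : (c • toU q u).fst = c • (toU q u).fst := Unitization.fst_smul _ _
    have h2 : (c • toU q u).snd = c • (toU q u).snd := Unitization.snd_smul _ _
    rw [h1, h2, map_smul_eq_mul, norm_smul, mul_add]

@[simp] lemma norm_ofU_inr (a : A) : ‖ofU q (a : Unitization ℂ A)‖ = q.p a := by
  rw [norm_def]
  show ‖(a : Unitization ℂ A).fst‖ + q.p (a : Unitization ℂ A).snd = q.p a
  simp

end UnifAlg

end UnifAlg

/-- `M(A)`: the nonzero continuous multiplicative linear functionals on the
topological algebra `A`. -/
def CharSpace (A : Type*) [NonUnitalRing A] [Module ℂ A] [TopologicalSpace A] :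
    Set (A → ℂ) :=
  {f | (∀ x y, f (x + y) = f x + f y) ∧ (∀ (c : ℂ) (x : A), f (c • x) = c * f x) ∧
       (∀ x y, f (x * y) = f x * f y) ∧ f ≠ 0 ∧ Continuous f}

section ExistsChar

set_option linter.unusedSectionVars false

variable {A : Type*} [NonUnitalCommRing A] [Module ℂ A] [SMulCommClass ℂ A A]
  [IsScalarTower ℂ A A] [TopologicalSpace A] [IsTopologicalAddGroup A]

open UnifAlg UniformSpace in
/-- Key Gelfand-theoretic step: any continuous uniform submultiplicative seminorm is
attained by a continuous character wherever it is positive. -/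
theorem SubmulSeminorm.exists_char (q : SubmulSeminorm A)
    (hsq : ∀ x, q.p (x * x) = q.p x * q.p x)
    (hcont : Continuous fun y => q.p y) (x : A) (hx : 0 < q.p x) :
    ∃ f ∈ CharSpace A, ‖f x‖ = q.p x := by
  classical
  haveI : Nontrivial (Completion (UnifAlg q)) := by
    refine ⟨1, 0, fun h => ?_⟩
    have h1 : ‖(1 : Completion (UnifAlg q))‖ = 1 := by
      rw [show (1 : Completion (UnifAlg q)) = ((1 : UnifAlg q) : Completion (UnifAlg q)) from
        (Completion.coe_one _).symm, Completion.norm_coe, UnifAlg.norm_def]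
      simp
    rw [h] at h1
    simp at h1
  set j : A → Completion (UnifAlg q) :=
    fun y => ((UnifAlg.ofU q (y : Unitization ℂ A) : UnifAlg q) : Completion (UnifAlg q)) with hj
  have hjadd : ∀ y z : A, j (y + z) = j y + j z := by
    intro y z
    rw [hj]
    simp only
    rw [Unitization.inr_add]
    exact Completion.coe_add _ _
  have hjsub : ∀ y z : A, j (y - z) = j y - j z := by
    intro y z
    have h := hjadd (y - z) z
    rw [sub_add_cancel] at h
    rw [h]; ring
  have hjmul : ∀ y z : A, j (y * z) = j y * j z := by
    intro y z
    rw [hj]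
    simp only
    rw [Unitization.inr_mul]
    exact Completion.coe_mul _ _
  have hjsmul : ∀ (c : ℂ) (y : A), j (c • y) = c • j y := by
    intro c y
    rw [hj]
    simp only
    rw [Unitization.inr_smul]
    exact Completion.coe_smul (X := UnifAlg q) c (UnifAlg.ofU q (y : Unitization ℂ A))
  -- norms of 2^k-th powers
  have hpow : ∀ k : ℕ, ∃ a : A,
      (UnifAlg.ofU q (x : Unitization ℂ A)) ^ (2 ^ k) = UnifAlg.ofU q (a : Unitization ℂ A) ∧
      q.p a = q.p x ^ (2 ^ k) := by
    intro k
    induction k with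
    | zero => exact ⟨x, by simp, by simp⟩
    | succ k ih =>
      obtain ⟨a, ha, hpa⟩ := ih
      refine ⟨a * a, ?_, ?_⟩
      · rw [pow_succ, pow_mul, ha, sq, ← UnifAlg.ofU_mul, ← Unitization.inr_mul]
      · rw [hsq a, hpa, ← sq, ← pow_mul, ← pow_succ]
  have hnorm_pow : ∀ k : ℕ, ‖(j x) ^ (2 ^ k)‖ = q.p x ^ (2 ^ k) := by
    intro k
    obtain ⟨a, ha, hpa⟩ := hpow k
    have hcp : (j x) ^ (2 ^ k) =
        (((UnifAlg.ofU q (x : Unitization ℂ A)) ^ (2 ^ k) : UnifAlg q) :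
          Completion (UnifAlg q)) :=
      (map_pow (Completion.coeRingHom : UnifAlg q →+* Completion (UnifAlg q)) _ _).symm
    rw [hcp, ha, Completion.norm_coe, UnifAlg.norm_ofU_inr, hpa]
  -- spectral radius computation
  have hsr : spectralRadius ℂ (j x) = ENNReal.ofReal (q.p x) := by
    have hgel := spectrum.pow_norm_pow_one_div_tendsto_nhds_spectralRadius (j x)
    have h2 : Filter.Tendsto (fun k : ℕ => (2 : ℕ) ^ k) Filter.atTop Filter.atTop :=
      tendsto_pow_atTop_atTop_of_one_lt one_lt_two
    have hconst : Filter.Tendsto (fun _ : ℕ => ENNReal.ofReal (q.p x)) Filter.atTop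
        (nhds (spectralRadius ℂ (j x))) := by
      refine (hgel.comp h2).congr ?_
      intro k
      show ENNReal.ofReal (‖(j x) ^ (2 ^ k)‖ ^ (1 / ((2 ^ k : ℕ) : ℝ))) = ENNReal.ofReal (q.p x)
      rw [hnorm_pow k]
      congr 1
      rw [← Real.rpow_natCast (q.p x) (2 ^ k), ← Real.rpow_mul (apply_nonneg _ _), mul_one_div,
        div_self (by positivity : ((2 ^ k : ℕ) : ℝ) ≠ 0), Real.rpow_one]
    exact tendsto_nhds_unique hconst tendsto_const_nhds
  obtain ⟨z, hz, hznorm⟩ := spectrum.exists_nnnorm_eq_spectralRadius (j x)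
  have hznorm' : ‖z‖ = q.p x := by
    rw [hsr] at hznorm
    have h := congrArg ENNReal.toReal hznorm
    rwa [ENNReal.coe_toReal, coe_nnnorm, ENNReal.toReal_ofReal (apply_nonneg q.p x)] at h
  obtain ⟨φ, hφ⟩ := WeakDual.CharacterSpace.mem_spectrum_iff_exists.mp hz
  have hjcont : Continuous j := by
    rw [continuous_iff_continuousAt]
    intro z₀
    rw [ContinuousAt, Metric.tendsto_nhds]
    intro ε hε
    have hopen : IsOpen {y : A | q.p (y - z₀) < ε} :=
      isOpen_lt (hcont.comp (continuous_id.sub continuous_const)) continuous_const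
    have hmem : z₀ ∈ {y : A | q.p (y - z₀) < ε} := by simp [hε]
    filter_upwards [hopen.mem_nhds hmem] with y hy
    have hd : dist (j y) (j z₀) = q.p (y - z₀) := by
      rw [dist_eq_norm, ← hjsub, hj]
      simp only
      rw [Completion.norm_coe, UnifAlg.norm_ofU_inr]
    rw [hd]
    exact hy
  refine ⟨fun y => φ (j y), ⟨?_, ?_, ?_, ?_, ?_⟩, ?_⟩
  · intro y z
    show φ (j (y + z)) = φ (j y) + φ (j z)
    rw [hjadd, map_add]
  · intro c y
    show φ (j (c • y)) = c * φ (j y)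
    rw [hjsmul, map_smul, smul_eq_mul]
  · intro y z
    show φ (j (y * z)) = φ (j y) * φ (j z)
    rw [hjmul, map_mul]
  · intro h
    have hx0 := congrFun h x
    simp only [Pi.zero_apply] at hx0
    rw [hx0] at hφ
    rw [← hφ, norm_zero] at hznorm'
    exact absurd hznorm'.symm (ne_of_gt hx)
  · exact (map_continuous φ).comp hjcont
  · show ‖φ (j x)‖ = q.p x
    rw [hφ, hznorm']

end ExistsChar
/-- Let `A` be a commutative complex Hausdorff topological algebra whose topology is
induced by a family `P` of uniform seminorms, and suppose `M(A)` is equicontinuous.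
Then `q x = sup {‖f x‖ : f ∈ M(A)}` is a uniform norm on `A` inducing its topology;
in particular `A` is a uniform normed algebra. -/
theorem uniform_norm_of_equicontinuous_charSpace {A : Type*} [NonUnitalCommRing A]
    [Module ℂ A] [SMulCommClass ℂ A A] [IsScalarTower ℂ A A]
    [TopologicalSpace A] [T2Space A]
    {ι : Type*} [Nonempty ι] (P : SeminormFamily ℂ A ι) (hP : WithSeminorms P)
    (hPmul : ∀ i x y, P i (x * y) ≤ P i x * P i y)
    (hPsq : ∀ i x, P i (x * x) = P i x * P i x)
    (heq : Equicontinuous (fun f : ↥(CharSpace A) => (f : A → ℂ))) :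
    ∃ Q : Seminorm ℂ A,
      (∀ x, Q x = sSup ((fun f : A → ℂ => ‖f x‖) '' CharSpace A)) ∧
      (∀ x, Q x = 0 → x = 0) ∧
      (∀ x y, Q (x * y) ≤ Q x * Q y) ∧
      (∀ x, Q (x * x) = Q x * Q x) ∧
      WithSeminorms (fun _ : Fin 1 => Q) := by
  classical
  haveI : IsTopologicalAddGroup A := hP.topologicalAddGroup
  -- basic facts about characters
  have hf0 : ∀ f ∈ CharSpace A, f 0 = 0 := by
    intro f hf
    have h := hf.1 0 0
    rw [add_zero] at h
    exact (left_eq_add.mp h)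
  have hfneg : ∀ f ∈ CharSpace A, ∀ y : A, f (-y) = -f y := by
    intro f hf y
    have h := hf.1 y (-y)
    rw [add_neg_cancel, hf0 f hf] at h
    exact eq_neg_of_add_eq_zero_right h.symm
  -- equicontinuity gives a neighborhood where all characters are bounded by 1
  have hEq := heq 0
  rw [Metric.equicontinuousAt_iff_right] at hEq
  have hV := hEq 1 one_pos
  have hVmem : {y : A | ∀ f : ↥(CharSpace A), dist ((f : A → ℂ) 0) ((f : A → ℂ) y) < 1}
      ∈ nhds (0 : A) := hV
  obtain ⟨U, hUb, hUsub⟩ := hP.hasBasis.mem_iff.mp hVmem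
  obtain ⟨s, r, hr, hU⟩ := P.basisSets_iff.mp hUb
  subst hU
  set p₀ : Seminorm ℂ A := s.sup P with hp₀
  have hball : ∀ f ∈ CharSpace A, ∀ y : A, p₀ y < r → ‖f y‖ < 1 := by
    intro f hf y hy
    have hmem : y ∈ (s.sup P).ball 0 r := by
      rw [Seminorm.mem_ball_zero]; exact hy
    have h : dist (f 0) (f y) < 1 := hUsub hmem ⟨f, hf⟩
    rwa [hf0 f hf, dist_zero_left] at h
  -- linear bound by scaling
  have hlin : ∀ f ∈ CharSpace A, ∀ y : A, ‖f y‖ ≤ p₀ y / r := by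
    intro f hf y
    have key : ∀ t : ℝ, p₀ y < t → ‖f y‖ ≤ t / r := by
      intro t hty
      have htpos : 0 < t := lt_of_le_of_lt (apply_nonneg _ _) hty
      set c : ℂ := ((r / t : ℝ) : ℂ) with hc
      have hnc : ‖c‖ = r / t := by
        rw [hc, Complex.norm_real, Real.norm_eq_abs, abs_of_pos (by positivity)]
      have hcy : p₀ (c • y) < r := by
        rw [map_smul_eq_mul, hnc]
        calc r / t * p₀ y < r / t * t := by
              exact mul_lt_mul_of_pos_left hty (by positivity)
          _ = r := by field_simp
      have h1 := hball f hf _ hcy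
      rw [hf.2.1 c y, norm_mul, hnc] at h1
      have h2 : ‖f y‖ * r < t := by
        have h3 := mul_lt_mul_of_pos_right h1 htpos
        rw [one_mul] at h3
        calc ‖f y‖ * r = r / t * ‖f y‖ * t := by field_simp
          _ < t := h3
      rw [le_div_iff₀ hr]
      exact h2.le
    refine le_of_forall_gt_imp_ge_of_dense ?_
    intro t' ht'
    have h4 : p₀ y < t' * r := by
      rw [div_lt_iff₀ hr] at ht'
      exact ht'
    have h5 := key (t' * r) h4
    rwa [mul_div_assoc, div_self hr.ne', mul_one] at h5
  -- square property for the finite sup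
  have hp₀sq : ∀ y : A, p₀ (y * y) = p₀ y * p₀ y := by
    intro y
    rcases Finset.eq_empty_or_nonempty s with hs | hs
    · subst hs
      simp [hp₀, Seminorm.bot_eq_zero]
    · refine le_antisymm ?_ ?_
      · refine Seminorm.finset_sup_apply_le (mul_nonneg (apply_nonneg _ _) (apply_nonneg _ _)) ?_
        intro i hi
        rw [hPsq i]
        exact mul_le_mul (Seminorm.le_finset_sup_apply hi) (Seminorm.le_finset_sup_apply hi)
          (apply_nonneg _ _) (apply_nonneg _ _)
      · obtain ⟨i, hi, hieq⟩ := Seminorm.exists_apply_eq_finset_sup P hs y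
        rw [hp₀, hieq, ← hPsq i]
        exact Seminorm.le_finset_sup_apply hi
  -- iterated squares
  have hfpow : ∀ f ∈ CharSpace A, ∀ y : A, ∀ k : ℕ,
      ∃ a : A, ‖f a‖ = ‖f y‖ ^ (2 ^ k) ∧ p₀ a = p₀ y ^ (2 ^ k) := by
    intro f hf y k
    induction k with
    | zero => exact ⟨y, by simp, by simp⟩
    | succ k ih =>
      obtain ⟨a, hfa, hpa⟩ := ih
      refine ⟨a * a, ?_, ?_⟩
      · rw [hf.2.2.1 a a, norm_mul, hfa, ← sq, ← pow_mul, ← pow_succ]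
      · rw [hp₀sq a, hpa, ← sq, ← pow_mul, ← pow_succ]
  -- the uniform bound
  have hbd : ∀ f ∈ CharSpace A, ∀ y : A, ‖f y‖ ≤ p₀ y := by
    intro f hf y
    set C : ℝ := max (1 / r) 1 with hC
    have hC1 : (1 : ℝ) ≤ C := le_max_right _ _
    have hCpos : (0 : ℝ) < C := lt_of_lt_of_le one_pos hC1
    have hkey : ∀ k : ℕ, ‖f y‖ ≤ C ^ ((1 : ℝ) / ((2 ^ k : ℕ) : ℝ)) * p₀ y := by
      intro k
      obtain ⟨a, hfa, hpa⟩ := hfpow f hf y k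
      have h1 : ‖f y‖ ^ (2 ^ k) ≤ C * p₀ y ^ (2 ^ k) := by
        rw [← hfa, ← hpa]
        calc ‖f a‖ ≤ p₀ a / r := hlin f hf a
          _ = (1 / r) * p₀ a := by ring
          _ ≤ C * p₀ a := mul_le_mul_of_nonneg_right (le_max_left _ _) (apply_nonneg _ _)
      have hm : (0 : ℝ) < ((2 ^ k : ℕ) : ℝ) := by positivity
      have h2 : ((‖f y‖ ^ (2 ^ k) : ℝ)) ^ ((1 : ℝ) / ((2 ^ k : ℕ) : ℝ)) ≤
          (C * p₀ y ^ (2 ^ k)) ^ ((1 : ℝ) / ((2 ^ k : ℕ) : ℝ)) :=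
        Real.rpow_le_rpow (by positivity) h1 (by positivity)
      rwa [Real.mul_rpow hCpos.le (by positivity), ← Real.rpow_natCast ‖f y‖ (2 ^ k),
        ← Real.rpow_mul (norm_nonneg _), mul_one_div, div_self hm.ne', Real.rpow_one,
        ← Real.rpow_natCast (p₀ y) (2 ^ k), ← Real.rpow_mul (apply_nonneg _ _), mul_one_div,
        div_self hm.ne', Real.rpow_one] at h2
    have ht : Filter.Tendsto (fun k : ℕ => C ^ ((1 : ℝ) / ((2 ^ k : ℕ) : ℝ)) * p₀ y)
        Filter.atTop (nhds (1 * p₀ y)) := by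
      refine Filter.Tendsto.mul_const _ ?_
      have he : Filter.Tendsto (fun k : ℕ => (1 : ℝ) / ((2 ^ k : ℕ) : ℝ)) Filter.atTop
          (nhds 0) := by
        have : (fun k : ℕ => (1 : ℝ) / ((2 ^ k : ℕ) : ℝ)) = fun k : ℕ => ((1 : ℝ) / 2) ^ k := by
          funext k
          push_cast
          rw [one_div, one_div, inv_pow]
        rw [this]
        exact tendsto_pow_atTop_nhds_zero_of_lt_one (by norm_num) (by norm_num)
      have hc : ContinuousAt (fun e : ℝ => C ^ e) 0 := Real.continuousAt_const_rpow hCpos.ne'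
      have h := hc.tendsto.comp he
      simpa [Real.rpow_zero, Function.comp_def] using h
    rw [one_mul] at ht
    exact ge_of_tendsto' ht hkey
  -- the sup function
  set Qf : A → ℝ := fun y => sSup ((fun f : A → ℂ => ‖f y‖) '' CharSpace A) with hQf
  have hSbdd : ∀ y : A, ∀ v ∈ (fun f : A → ℂ => ‖f y‖) '' CharSpace A, v ≤ p₀ y := by
    rintro y v ⟨f, hf, rfl⟩
    exact hbd f hf y
  have hSnn : ∀ y : A, ∀ v ∈ (fun f : A → ℂ => ‖f y‖) '' CharSpace A, 0 ≤ v := by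
    rintro y v ⟨f, hf, rfl⟩
    exact norm_nonneg _
  have hQle : ∀ y, Qf y ≤ p₀ y := fun y => Real.sSup_le (hSbdd y) (apply_nonneg _ _)
  have hQnn : ∀ y, 0 ≤ Qf y := fun y => Real.sSup_nonneg (hSnn y)
  have hmemle : ∀ f ∈ CharSpace A, ∀ y : A, ‖f y‖ ≤ Qf y := by
    intro f hf y
    exact le_csSup ⟨p₀ y, fun v hv => hSbdd y v hv⟩ ⟨f, hf, rfl⟩
  have hQ0 : Qf 0 = 0 := by
    refine le_antisymm (Real.sSup_le ?_ le_rfl) (hQnn 0)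
    rintro v ⟨f, hf, rfl⟩
    show ‖f 0‖ ≤ 0
    rw [hf0 f hf, norm_zero]
  have hQsmul_le : ∀ (d : ℂ) (z : A), Qf (d • z) ≤ ‖d‖ * Qf z := by
    intro d z
    refine Real.sSup_le ?_ (mul_nonneg (norm_nonneg d) (hQnn z))
    rintro v ⟨f, hf, rfl⟩
    show ‖f (d • z)‖ ≤ ‖d‖ * Qf z
    rw [hf.2.1 d z, norm_mul]
    exact mul_le_mul_of_nonneg_left (hmemle f hf z) (norm_nonneg d)
  -- every `P i` is bounded by `Qf`
  have hPleQ : ∀ (i : ι) (y : A), P i y ≤ Qf y := by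
    intro i y
    rcases eq_or_lt_of_le (apply_nonneg (P i) y) with h0 | h0
    · rw [← h0]; exact hQnn y
    · obtain ⟨f, hf, hfy⟩ := SubmulSeminorm.exists_char ⟨P i, hPmul i⟩ (hPsq i)
        (hP.continuous_seminorm i) y h0
      rw [← hfy]
      exact hmemle f hf y
  -- build the seminorm
  refine ⟨{ toFun := Qf
            map_zero' := hQ0
            add_le' := ?_
            neg' := ?_
            smul' := ?_ }, fun x => rfl, ?_, ?_, ?_, ?_⟩
  · intro y z
    refine Real.sSup_le ?_ (add_nonneg (hQnn y) (hQnn z))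
    rintro v ⟨f, hf, rfl⟩
    show ‖f (y + z)‖ ≤ Qf y + Qf z
    calc ‖f (y + z)‖ = ‖f y + f z‖ := by rw [hf.1]
      _ ≤ ‖f y‖ + ‖f z‖ := norm_add_le _ _
      _ ≤ Qf y + Qf z := add_le_add (hmemle f hf y) (hmemle f hf z)
  · intro y
    show sSup _ = sSup _
    congr 1
    refine Set.image_congr ?_
    intro f hf
    rw [hfneg f hf, norm_neg]
  · intro c y
    rcases eq_or_ne c 0 with rfl | hc
    · rw [zero_smul, norm_zero, zero_mul]
      exact hQ0
    · refine le_antisymm (hQsmul_le c y) ?_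
      have h2 := hQsmul_le c⁻¹ (c • y)
      rw [inv_smul_smul₀ hc] at h2
      have h3 := mul_le_mul_of_nonneg_left h2 (norm_nonneg c)
      rw [norm_inv, ← mul_assoc, mul_inv_cancel₀ (norm_ne_zero_iff.mpr hc), one_mul] at h3
      exact h3
  -- definiteness
  · intro x hQx
    by_contra hx
    obtain ⟨i, hi⟩ := hP.separating_of_T1 x hx
    have hpi : 0 < P i x := lt_of_le_of_ne (apply_nonneg _ _) (Ne.symm hi)
    have h := hPleQ i x
    show False
    have : Qf x = 0 := hQx
    rw [this] at h
    exact absurd (lt_of_lt_of_le hpi h) (lt_irrefl 0)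
  -- submultiplicativity
  · intro y z
    refine Real.sSup_le ?_ (mul_nonneg (hQnn y) (hQnn z))
    rintro v ⟨f, hf, rfl⟩
    show ‖f (y * z)‖ ≤ Qf y * Qf z
    rw [hf.2.2.1 y z, norm_mul]
    exact mul_le_mul (hmemle f hf y) (hmemle f hf z) (norm_nonneg _) (hQnn y)
  -- square property
  · intro y
    refine le_antisymm ?_ ?_
    · refine Real.sSup_le ?_ (mul_nonneg (hQnn y) (hQnn y))
      rintro v ⟨f, hf, rfl⟩
      show ‖f (y * y)‖ ≤ Qf y * Qf y
      rw [hf.2.2.1 y y, norm_mul]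
      exact mul_le_mul (hmemle f hf y) (hmemle f hf y) (norm_nonneg _) (hQnn y)
    · have hsq1 : ∀ f ∈ CharSpace A, ‖f y‖ ≤ Real.sqrt (Qf (y * y)) := by
        intro f hf
        have h1 : ‖f y‖ * ‖f y‖ ≤ Qf (y * y) := by
          rw [← norm_mul, ← hf.2.2.1 y y]
          exact hmemle f hf (y * y)
        nlinarith [Real.sq_sqrt (hQnn (y * y)), Real.sqrt_nonneg (Qf (y * y)),
          norm_nonneg (f y)]
      have h2 : Qf y ≤ Real.sqrt (Qf (y * y)) := by
        refine Real.sSup_le ?_ (Real.sqrt_nonneg _)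
        rintro v ⟨f, hf, rfl⟩
        exact hsq1 f hf
      calc Qf y * Qf y ≤ Real.sqrt (Qf (y * y)) * Real.sqrt (Qf (y * y)) :=
            mul_le_mul h2 h2 (hQnn y) (Real.sqrt_nonneg _)
        _ = Qf (y * y) := Real.mul_self_sqrt (hQnn (y * y))
  -- the topology
  · refine hP.congr ?_ ?_
    · intro _
      refine ⟨s, 1, ?_⟩
      rw [one_smul]
      intro y
      exact hQle y
    · intro i
      refine ⟨{0}, 1, ?_⟩
      rw [one_smul, Finset.sup_singleton]
      intro y
      exact hPleQ i y
end

section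
/- Let A be a commutative complex Hausdorff topological algebra whose topology is induced by a family of uniform seminorms, and suppose A is a Q-algebra (its set of quasi-invertible elements is open). Then there is a uniform norm on A inducing the topology of A; in particular A is a uniform normed algebra. -/
open UniformSpace
open scoped ENNReal NNReal


section Key
variable {A : Type*} [NonUnitalCommRing A] [Module ℂ A] [SMulCommClass ℂ A A]
  [IsScalarTower ℂ A A]

set_option maxHeartbeats 2000000 in
set_option synthInstance.maxHeartbeats 1000000 in
lemma exists_not_quasiInv (p : Seminorm ℂ A)
    (hmul : ∀ x y : A, p (x * y) ≤ p x * p y)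
    (hsq : ∀ x : A, p (x * x) = p x * p x)
    (x : A) (hx : p x ≠ 0) :
    ∃ z : ℂ, ‖z‖ = p x ∧ ¬ IsQuasiInv (z⁻¹ • x) := by
  letI : SeminormedAddCommGroup A := AddGroupSeminorm.toSeminormedAddCommGroup p.toAddGroupSeminorm
  letI : NonUnitalSeminormedCommRing A :=
    { ‹SeminormedAddCommGroup A›, ‹NonUnitalCommRing A› with
      norm_mul_le := by exact hmul
      dist_eq := SeminormedAddCommGroup.dist_eq }
  letI : NormedSpace ℂ A := ⟨by exact fun c y => (map_smul_eq_mul p c y).le⟩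
  have hnorm : ∀ a : A, ‖a‖ = p a := fun _ => rfl
  set B := SeparationQuotient A with hB
  haveI : SMulCommClass ℂ B B := ⟨fun c b₁ b₂ => by
    obtain ⟨a₁, rfl⟩ := SeparationQuotient.surjective_mk b₁
    obtain ⟨a₂, rfl⟩ := SeparationQuotient.surjective_mk b₂
    show c • (SeparationQuotient.mk a₁ * SeparationQuotient.mk a₂) =
      SeparationQuotient.mk a₁ * (c • SeparationQuotient.mk a₂)
    rw [← SeparationQuotient.mk_mul, ← SeparationQuotient.mk_smul,
      ← SeparationQuotient.mk_smul, ← SeparationQuotient.mk_mul, mul_smul_comm]⟩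
  haveI : IsScalarTower ℂ B B := ⟨fun c b₁ b₂ => by
    obtain ⟨a₁, rfl⟩ := SeparationQuotient.surjective_mk b₁
    obtain ⟨a₂, rfl⟩ := SeparationQuotient.surjective_mk b₂
    show (c • SeparationQuotient.mk a₁) * SeparationQuotient.mk a₂ =
      c • (SeparationQuotient.mk a₁ * SeparationQuotient.mk a₂)
    rw [← SeparationQuotient.mk_smul, ← SeparationQuotient.mk_mul,
      ← SeparationQuotient.mk_mul, ← SeparationQuotient.mk_smul, smul_mul_assoc]⟩
  have hBsq : ∀ b : B, ‖b * b‖ = ‖b‖ * ‖b‖ := by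
    intro b
    obtain ⟨a, rfl⟩ := SeparationQuotient.surjective_mk b
    rw [← SeparationQuotient.mk_mul, SeparationQuotient.norm_mk,
      SeparationQuotient.norm_mk, hnorm, hnorm]
    exact hsq a
  haveI : RegularNormedAlgebra ℂ B := by
    refine ⟨AddMonoidHomClass.isometry_of_norm (ContinuousLinearMap.mul ℂ B) fun b => ?_⟩
    refine le_antisymm (ContinuousLinearMap.opNorm_le_bound _ (norm_nonneg b)
      fun y => norm_mul_le b y) ?_
    rcases eq_or_ne b 0 with rfl | hb
    · simp
    · have hb' : ‖b‖ ≠ 0 := norm_ne_zero_iff.mpr hb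
      calc ‖b‖ = ‖b * b‖ / ‖b‖ := by rw [hBsq]; field_simp
      _ ≤ ‖ContinuousLinearMap.mul ℂ B b‖ := by
          simpa using ContinuousLinearMap.ratio_le_opNorm (ContinuousLinearMap.mul ℂ B b) b
  set U := Unitization ℂ B with hU
  letI : NormedCommRing U := { Unitization.instNormedRing with mul_comm := mul_comm }
  set C := Completion U with hC
  haveI : Nontrivial C := ⟨⟨((0 : U) : C), ((1 : U) : C), fun h => by
    exact zero_ne_one (Completion.coe_injective U h)⟩⟩
  set φ : A → C := fun a => (((SeparationQuotient.mk a : B) : U) : C) with hφ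
  have hφnorm : ∀ a : A, ‖φ a‖ = p a := by
    intro a
    rw [hφ]
    rw [Completion.norm_coe, Unitization.norm_inr, SeparationQuotient.norm_mk]
    rfl
  have hφmul : ∀ a b : A, φ (a * b) = φ a * φ b := by
    intro a b
    rw [hφ, ← Completion.coe_mul, ← Unitization.inr_mul, ← SeparationQuotient.mk_mul]
  have hφadd : ∀ a b : A, φ (a + b) = φ a + φ b := by
    intro a b
    rw [hφ, ← Completion.coe_add, ← Unitization.inr_add, ← SeparationQuotient.mk_add]
  have hφsub : ∀ a b : A, φ (a - b) = φ a - φ b := by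
    intro a b
    rw [hφ, ← Completion.coe_sub, ← Unitization.inr_sub, ← SeparationQuotient.mk_sub]
  have hφsmul : ∀ (c : ℂ) (a : A), φ (c • a) = c • φ a := by
    intro c a
    rw [hφ, ← Completion.coe_smul, ← Unitization.inr_smul, ← SeparationQuotient.mk_smul]
  have hφzero : φ 0 = 0 := by
    rw [hφ]
    simp only [SeparationQuotient.mk_zero, Unitization.inr_zero, Completion.coe_zero]
  -- iterated squares
  set q : ℕ → A := fun n => Nat.rec x (fun _ a => a * a) n with hq
  have hq0 : q 0 = x := rfl
  have hqs : ∀ n, q (n + 1) = q n * q n := fun n => rfl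
  have hqp : ∀ n, p (q n) = p x ^ 2 ^ n := by
    intro n
    induction n with
    | zero => simp [hq0]
    | succ n ih => rw [hqs, hsq, ih, ← pow_add, pow_succ, mul_two]
  have hφq : ∀ n, φ (q n) = φ x ^ 2 ^ n := by
    intro n
    induction n with
    | zero => simp [hq0]
    | succ n ih => rw [hqs, hφmul, ih, ← pow_add, pow_succ, mul_two]
  -- spectral radius equals p x
  have hrad : spectralRadius ℂ (φ x) = (‖φ x‖₊ : ℝ≥0∞) := by
    have h1 := spectrum.pow_nnnorm_pow_one_div_tendsto_nhds_spectralRadius (φ x)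
    have h2 : Filter.Tendsto (fun n : ℕ => (2 : ℕ) ^ n) Filter.atTop Filter.atTop :=
      tendsto_pow_atTop_atTop_of_one_lt one_lt_two
    have h3 := h1.comp h2
    rw [Function.comp_def] at h3
    have h4 : (fun n : ℕ => (‖φ x ^ 2 ^ n‖₊ : ℝ≥0∞) ^ (1 / ((2 : ℕ) ^ n : ℕ) : ℝ)) =
        fun _ : ℕ => (‖φ x‖₊ : ℝ≥0∞) := by
      funext n
      have hn : ‖φ x ^ 2 ^ n‖₊ = ‖φ x‖₊ ^ 2 ^ n := by
        have h5 : ‖φ x ^ 2 ^ n‖ = ‖φ x‖ ^ 2 ^ n := by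
          rw [← hφq, hφnorm, hqp, ← hφnorm]
        ext
        push_cast
        simpa using h5
      rw [hn, ENNReal.coe_pow, ← ENNReal.rpow_natCast _ (2 ^ n), ← ENNReal.rpow_mul,
        mul_one_div_cancel (by positivity : (((2 : ℕ) ^ n : ℕ) : ℝ) ≠ 0), ENNReal.rpow_one]
    rw [h4] at h3
    exact tendsto_nhds_unique h3 tendsto_const_nhds
  obtain ⟨z, hzmem, hznorm⟩ := spectrum.exists_nnnorm_eq_spectralRadius (φ x)
  have hznorm' : ‖z‖ = p x := by
    rw [hrad] at hznorm
    have h6 : ‖z‖₊ = ‖φ x‖₊ := by exact_mod_cast hznorm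
    calc ‖z‖ = ‖φ x‖ := congrArg NNReal.toReal h6
    _ = p x := hφnorm x
  have hz0 : z ≠ 0 := by
    intro h
    rw [h, norm_zero] at hznorm'
    exact hx hznorm'.symm
  refine ⟨z, hznorm', ?_⟩
  rintro ⟨y, h1, h2⟩
  apply spectrum.mem_iff.mp hzmem
  have E : φ (z⁻¹ • x) + φ y - φ (z⁻¹ • x) * φ y = 0 := by
    have h7 := congrArg φ h1
    rwa [hφsub, hφadd, hφmul, hφzero] at h7
  have hu : (1 - φ (z⁻¹ • x)) * (1 - φ y) = 1 := by linear_combination -E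
  have hsmulx : algebraMap ℂ C z * φ (z⁻¹ • x) = φ x := by
    rw [hφsmul, ← Algebra.smul_def, smul_smul, mul_inv_cancel₀ hz0, one_smul]
  have hw : algebraMap ℂ C z - φ x = algebraMap ℂ C z * (1 - φ (z⁻¹ • x)) := by
    rw [mul_sub, mul_one, hsmulx]
  rw [hw]
  exact (IsUnit.map (algebraMap ℂ C) (isUnit_iff_ne_zero.mpr hz0)).mul
    (IsUnit.of_mul_eq_one _ hu)

end Key

/-- Let `A` be a commutative complex Hausdorff topological algebra whose topology is
induced by a family `P` of uniform seminorms, and suppose `A` is a Q-algebra (its set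
of quasi-invertible elements is open). Then the topology of `A` is induced by a single
uniform norm; in particular `A` is a uniform normed algebra. -/
theorem uniform_norm_of_uT_qAlgebra {A : Type*} [NonUnitalCommRing A]
    [Module ℂ A] [SMulCommClass ℂ A A] [IsScalarTower ℂ A A]
    [TopologicalSpace A] [T2Space A]
    {ι : Type*} [Nonempty ι] (P : SeminormFamily ℂ A ι) (hP : WithSeminorms P)
    (hPmul : ∀ i x y, P i (x * y) ≤ P i x * P i y)
    (hPsq : ∀ i x, P i (x * x) = P i x * P i x)
    (hQ : IsOpen {x : A | IsQuasiInv x}) :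
    ∃ Q : Seminorm ℂ A,
      (∀ x, Q x = 0 → x = 0) ∧
      (∀ x y, Q (x * y) ≤ Q x * Q y) ∧
      (∀ x, Q (x * x) = Q x * Q x) ∧
      WithSeminorms (fun _ : Fin 1 => Q) := by
   classical
  have h0 : (0 : A) ∈ {x : A | IsQuasiInv x} := ⟨0, by simp, by simp⟩
  have hnhds : {x : A | IsQuasiInv x} ∈ nhds (0 : A) := hQ.mem_nhds h0
  rcases hP.hasBasis.mem_iff.mp hnhds with ⟨V, hV, hVsub⟩
  rcases P.basisSets_iff.mp hV with ⟨s₀, ε, hε, rfl⟩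
  obtain ⟨i₀⟩ := ‹Nonempty ι›
  set s : Finset ι := insert i₀ s₀ with hs
  set Q : Seminorm ℂ A := s.sup P with hQdef
  have hmono : ∀ x : A, (s₀.sup P) x ≤ Q x := fun x =>
    (Finset.sup_mono (Finset.subset_insert i₀ s₀) : s₀.sup P ≤ Q) x
  have hle : ∀ i ∈ s, ∀ x : A, P i x ≤ Q x := fun i hi x =>
    (Finset.le_sup (f := P) hi : P i ≤ Q) x
  have hball : ∀ x : A, Q x < ε → IsQuasiInv x := by
    intro x hx
    apply hVsub
    refine (Seminorm.mem_ball_zero _).mpr ?_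
    exact lt_of_le_of_lt (hmono x) hx
  have hdom : ∀ (j : ι) (x : A), P j x ≤ ε⁻¹ * Q x := by
    intro j x
    rcases eq_or_ne (P j x) 0 with h | h
    · rw [h]
      have := apply_nonneg Q x
      positivity
    · obtain ⟨z, hz, hnq⟩ := exists_not_quasiInv (P j) (hPmul j) (hPsq j) x h
      have hp : 0 < P j x := lt_of_le_of_ne (apply_nonneg _ _) (Ne.symm h)
      have hge : ε ≤ Q (z⁻¹ • x) := not_lt.mp fun hlt => hnq (hball _ hlt)
      rw [map_smul_eq_mul, norm_inv, hz, inv_mul_eq_div, le_div_iff₀ hp] at hge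
      rw [inv_mul_eq_div, le_div_iff₀ hε]
      linarith
  have hQzero : ∀ x : A, Q x = 0 → x = 0 := by
    intro x hx
    by_contra hne
    have hx' : ∀ j, P j x = 0 := fun j =>
      le_antisymm (by simpa [hx] using hdom j x) (apply_nonneg _ _)
    have hmem : ({x}ᶜ : Set A) ∈ nhds (0 : A) :=
      isOpen_compl_singleton.mem_nhds (by simpa using Ne.symm hne)
    rcases hP.hasBasis.mem_iff.mp hmem with ⟨W, hW, hWsub⟩
    rcases P.basisSets_iff.mp hW with ⟨t, δ, hδ, rfl⟩
    refine hWsub ?_ rfl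
    refine (Seminorm.mem_ball_zero _).mpr ?_
    exact Seminorm.finset_sup_apply_lt hδ fun i _ => by rw [hx' i]; exact hδ
  have hQmul : ∀ x y : A, Q (x * y) ≤ Q x * Q y := by
    intro x y
    have h1 : (0 : ℝ) ≤ Q x * Q y := mul_nonneg (apply_nonneg _ _) (apply_nonneg _ _)
    refine Seminorm.finset_sup_apply_le h1 fun i hi => ?_
    calc P i (x * y) ≤ P i x * P i y := hPmul i x y
    _ ≤ Q x * Q y :=
      mul_le_mul (hle i hi x) (hle i hi y) (apply_nonneg _ _) (apply_nonneg _ _)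
  refine ⟨Q, hQzero, hQmul, ?_, ?_⟩
  · intro x
    refine le_antisymm (hQmul x x) ?_
    have h1 : ∀ i ∈ s, P i x ≤ Real.sqrt (Q (x * x)) := by
      intro i hi
      rw [← Real.sqrt_mul_self (apply_nonneg (P i) x), ← hPsq i]
      exact Real.sqrt_le_sqrt (hle i hi (x * x))
    have h2 : Q x ≤ Real.sqrt (Q (x * x)) :=
      Seminorm.finset_sup_apply_le (Real.sqrt_nonneg _) h1
    calc Q x * Q x ≤ Real.sqrt (Q (x * x)) * Real.sqrt (Q (x * x)) :=
      mul_le_mul h2 h2 (apply_nonneg _ _) (Real.sqrt_nonneg _)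
    _ = Q (x * x) := Real.mul_self_sqrt (apply_nonneg _ _)
  · refine hP.congr ?_ ?_
    · intro _
      exact ⟨s, 1, le_of_eq (by rw [one_smul, Seminorm.comp_id])⟩
    · intro j
      refine ⟨{0}, Real.toNNReal ε⁻¹, ?_⟩
      rw [Finset.sup_singleton, Seminorm.comp_id, Seminorm.le_def]
      intro x
      rw [Seminorm.smul_apply]
      have hc : ((Real.toNNReal ε⁻¹ : ℝ≥0) : ℝ) = ε⁻¹ :=
        Real.coe_toNNReal _ (inv_nonneg.mpr hε.le)
      calc P j x ≤ ε⁻¹ * Q x := hdom j x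
      _ = (Real.toNNReal ε⁻¹ : ℝ≥0) • Q x := by rw [NNReal.smul_def, smul_eq_mul, hc]
end

section
/- Let A be a commutative complex Hausdorff topological algebra whose topology is induced by a family of uniform seminorms, whose underlying locally convex space is barrelled, and which is spectrally bounded (for every x ∈ A the spectrum of x is a bounded subset of ℂ). Then there is a uniform norm on A inducing the topology of A; in particular A is a uniform normed algebra. -/
open scoped Topology ENNReal

/-- Iterated powers in a possibly non-unital semigroup: `nupow x n = x ^ (n + 1)`. -/
def nupow {A : Type*} [Mul A] (x : A) : ℕ → A
  | 0 => x
  | n + 1 => nupow x n * x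

theorem nupow_add {A : Type*} [Semigroup A] (x : A) (a b : ℕ) :
    nupow x (a + b + 1) = nupow x a * nupow x b := by
  induction b with
  | zero => rfl
  | succ k ih =>
    have h1 : a + (k + 1) + 1 = (a + k + 1) + 1 := by omega
    rw [h1]
    show nupow x (a + k + 1) * x = nupow x a * nupow x (k + 1)
    rw [ih]
    exact mul_assoc _ _ _

/-- Auxiliary: in a seminormed commutative complex algebra, if an element has
multiplicative norm powers and the "resolvent" exists outside radius `M`, then `‖x‖ ≤ M`.
Proved by passing to the completion (a Banach algebra) and using Gelfand's formula. -/
theorem aux_norm_le_of_isUnit {R : Type*} [SeminormedCommRing R] [NormedAlgebra ℂ R]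
    {x : R} {M : ℝ} (hM : 0 ≤ M)
    (hxn : ∀ n : ℕ, ‖x ^ (n + 1)‖ = ‖x‖ ^ (n + 1))
    (hres : ∀ z : ℂ, M < ‖z‖ → IsUnit (algebraMap ℂ R z - x)) : ‖x‖ ≤ M := by
  set B := UniformSpace.Completion R
  have hspec : ∀ z ∈ spectrum ℂ ((x : B)), ‖z‖ ≤ M := by
    intro z hz
    by_contra hc
    push_neg at hc
    have h2 := (hres z hc).map (UniformSpace.Completion.coeRingHom (α := R))
    rw [map_sub] at h2
    have h3 : IsUnit (algebraMap ℂ B z - (x : B)) := by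
      rwa [UniformSpace.Completion.algebraMap_def]
    exact spectrum.notMem_iff.mpr h3 hz
  have hrad : spectralRadius ℂ (x : B) ≤ ENNReal.ofReal M := by
    rw [spectralRadius]
    refine iSup₂_le fun z hz => ?_
    rw [← ENNReal.ofReal_coe_nnreal]
    exact ENNReal.ofReal_le_ofReal (by simpa using hspec z hz)
  have hcoe : ∀ n : ℕ, ((x ^ n : R) : B) = ((x : B)) ^ n := by
    intro n
    induction n with
    | zero => rw [pow_zero, pow_zero, UniformSpace.Completion.coe_one]
    | succ k ih => rw [pow_succ, pow_succ, UniformSpace.Completion.coe_mul, ih]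
  have hseq : (fun n : ℕ => ((‖(x : B) ^ n‖₊ : ℝ≥0∞) ^ (1 / (n : ℝ))))
      =ᶠ[Filter.atTop] fun _ => (‖x‖₊ : ℝ≥0∞) := by
    filter_upwards [Filter.eventually_ge_atTop 1] with n hn
    have hn0 : (n : ℝ) ≠ 0 := Nat.cast_ne_zero.mpr (by omega)
    obtain ⟨m, rfl⟩ : ∃ m, n = m + 1 := ⟨n - 1, by omega⟩
    have hnorm : ‖(x : B) ^ (m + 1)‖ = ‖x‖ ^ (m + 1) := by
      rw [← hcoe, UniformSpace.Completion.norm_coe]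
      exact hxn m
    have hnn : ‖(x : B) ^ (m + 1)‖₊ = ‖x‖₊ ^ (m + 1) := by
      ext
      push_cast
      exact hnorm
    rw [hnn, ENNReal.coe_pow, ← ENNReal.rpow_natCast ((‖x‖₊ : ℝ≥0∞)) (m + 1),
      ← ENNReal.rpow_mul, mul_one_div, div_self hn0, ENNReal.rpow_one]
  have hlim := spectrum.pow_nnnorm_pow_one_div_tendsto_nhds_spectralRadius (x : B)
  have heq : spectralRadius ℂ (x : B) = (‖x‖₊ : ℝ≥0∞) :=
    tendsto_nhds_unique (Filter.Tendsto.congr' hseq hlim) tendsto_const_nhds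
  have hfin : ENNReal.ofReal ‖x‖ ≤ ENNReal.ofReal M := by
    rw [show ENNReal.ofReal ‖x‖ = (‖x‖₊ : ℝ≥0∞) from ofReal_norm x, ← heq]
    exact hrad
  exact (ENNReal.ofReal_le_ofReal_iff hM).mp hfin

/-- Auxiliary: a submultiplicative seminorm with multiplicative powers on an element `x`
of a nonunital commutative complex algebra is bounded by any bound on the quasispectrum. -/
theorem aux_seminorm_le_of_quasispectrum {A : Type*} [NonUnitalCommRing A] [Module ℂ A]
    [SMulCommClass ℂ A A] [IsScalarTower ℂ A A]
    (p : Seminorm ℂ A) (hpm : ∀ x y, p (x * y) ≤ p x * p y)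
    (x : A) {M : ℝ} (hM : 0 ≤ M)
    (hxn : ∀ n : ℕ, p (nupow x n) = p x ^ (n + 1))
    (hq : ∀ z ∈ quasispectrum ℂ x, ‖z‖ ≤ M) : p x ≤ M := by
  let q : AddGroupSeminorm (Unitization ℂ A) :=
  { toFun := fun u => ‖u.fst‖ + p u.snd
    map_zero' := by simp
    add_le' := fun u v => by
      simp only [Unitization.fst_add, Unitization.snd_add]
      have h1 := norm_add_le u.fst v.fst
      have h2 := map_add_le_add p u.snd v.snd
      linarith
    neg' := fun u => by
      simp [Unitization.fst_neg, Unitization.snd_neg, map_neg_eq_map] }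
  letI s1 : SeminormedAddCommGroup (Unitization ℂ A) := q.toSeminormedAddCommGroup
  letI s2 : SeminormedCommRing (Unitization ℂ A) :=
  { s1, (inferInstance : CommRing (Unitization ℂ A)) with
    norm_mul_le := fun u v => by
      show ‖(u * v).fst‖ + p (u * v).snd ≤ (‖u.fst‖ + p u.snd) * (‖v.fst‖ + p v.snd)
      rw [Unitization.fst_mul, Unitization.snd_mul]
      have h1 : p (u.fst • v.snd + v.fst • u.snd + u.snd * v.snd)
          ≤ ‖u.fst‖ * p v.snd + ‖v.fst‖ * p u.snd + p u.snd * p v.snd := by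
        refine (map_add_le_add p _ _).trans ?_
        have h2 := map_add_le_add p (u.fst • v.snd) (v.fst • u.snd)
        rw [map_smul_eq_mul, map_smul_eq_mul] at h2
        have h3 := hpm u.snd v.snd
        linarith
      have h4 : ‖u.fst * v.fst‖ ≤ ‖u.fst‖ * ‖v.fst‖ := norm_mul_le _ _
      nlinarith [apply_nonneg p u.snd, apply_nonneg p v.snd, norm_nonneg u.fst,
        norm_nonneg v.fst] }
  letI s3 : NormedAlgebra ℂ (Unitization ℂ A) :=
  { (inferInstance : Algebra ℂ (Unitization ℂ A)) with
    norm_smul_le := fun c u => by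
      show ‖(c • u).fst‖ + p (c • u).snd ≤ ‖c‖ * (‖u.fst‖ + p u.snd)
      rw [Unitization.fst_smul, Unitization.snd_smul, map_smul_eq_mul, smul_eq_mul,
        norm_mul, mul_add] }
  have hpow : ∀ n : ℕ, (Unitization.inr x : Unitization ℂ A) ^ (n + 1)
      = Unitization.inr (nupow x n) := by
    intro n
    induction n with
    | zero => rw [pow_one]; rfl
    | succ k ih =>
      rw [pow_succ, ih]
      show _ = (Unitization.inr (nupow x k * x) : Unitization ℂ A)
      rw [Unitization.inr_mul]
  have hnorm_inr : ∀ y : A, ‖(Unitization.inr y : Unitization ℂ A)‖ = p y := by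
    intro y
    show ‖(Unitization.inr y : Unitization ℂ A).fst‖
      + p (Unitization.inr y : Unitization ℂ A).snd = p y
    rw [Unitization.fst_inr, Unitization.snd_inr, norm_zero, zero_add]
  have hxn' : ∀ n : ℕ, ‖(Unitization.inr x : Unitization ℂ A) ^ (n + 1)‖
      = ‖(Unitization.inr x : Unitization ℂ A)‖ ^ (n + 1) := by
    intro n
    rw [hpow, hnorm_inr, hnorm_inr, hxn]
  have hres : ∀ z : ℂ, M < ‖z‖ →
      IsUnit (algebraMap ℂ (Unitization ℂ A) z - Unitization.inr x) := by
    intro z hz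
    have hzq : z ∉ quasispectrum ℂ x := fun h => absurd (hq z h) (not_le.mpr hz)
    rw [Unitization.quasispectrum_eq_spectrum_inr ℂ x] at hzq
    exact spectrum.notMem_iff.mp hzq
  have hfin := aux_norm_le_of_isUnit (R := Unitization ℂ A) hM hxn' hres
  rwa [hnorm_inr] at hfin

/-- Let `A` be a commutative complex Hausdorff topological algebra whose topology is
induced by a family `P` of uniform seminorms, which is barrelled and spectrally
bounded (the spectrum of every element, computed in the unitization, is bounded).
Then the topology of `A` is induced by a single uniform norm; in particular `A` is a
uniform normed algebra. -/
theorem uniform_norm_of_barrelled_spectrally_bounded {A : Type*} [NonUnitalCommRing A]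
    [Module ℂ A] [SMulCommClass ℂ A A] [IsScalarTower ℂ A A]
    [TopologicalSpace A] [T2Space A]
    {ι : Type*} [Nonempty ι] (P : SeminormFamily ℂ A ι) (hP : WithSeminorms P)
    (hPmul : ∀ i x y, P i (x * y) ≤ P i x * P i y)
    (hPsq : ∀ i x, P i (x * x) = P i x * P i x)
    [BarrelledSpace ℂ A]
    (hsb : ∀ x : A, Bornology.IsBounded (quasispectrum ℂ x)) :
    ∃ Q : Seminorm ℂ A,
      (∀ x, Q x = 0 → x = 0) ∧
      (∀ x y, Q (x * y) ≤ Q x * Q y) ∧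
      (∀ x, Q (x * x) = Q x * Q x) ∧
      WithSeminorms (fun _ : Fin 1 => Q) := by
  -- Step 1: each seminorm has multiplicative powers
  have hpow : ∀ (i : ι) (x : A) (n : ℕ), P i (nupow x n) = P i x ^ (n + 1) := by
    intro i x n
    have hub : ∀ m : ℕ, P i (nupow x m) ≤ P i x ^ (m + 1) := by
      intro m
      induction m with
      | zero => simp [nupow]
      | succ k ih =>
        show P i (nupow x k * x) ≤ P i x ^ (k + 1) * P i x
        exact (hPmul i _ _).trans (mul_le_mul_of_nonneg_right ih (apply_nonneg _ _))
    have h2 : ∀ k : ℕ, P i (nupow x (2 ^ k - 1)) = P i x ^ 2 ^ k := by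
      intro k
      induction k with
      | zero => simp [nupow]
      | succ j ih =>
        have h1le : 1 ≤ 2 ^ j := Nat.one_le_two_pow
        have hidx : 2 ^ (j + 1) - 1 = (2 ^ j - 1) + (2 ^ j - 1) + 1 := by
          have : 2 ^ (j + 1) = 2 ^ j + 2 ^ j := by ring
          omega
        have hexp : 2 ^ (j + 1) = 2 ^ j + 2 ^ j := by ring
        rw [hidx, nupow_add, hPsq i (nupow x (2 ^ j - 1)), ih, hexp, pow_add]
    have hlb : P i x ^ (n + 1) ≤ P i (nupow x n) := by
      rcases eq_or_lt_of_le (apply_nonneg (P i) x) with h0 | h0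
      · rw [← h0, zero_pow (Nat.succ_ne_zero n)]
        exact apply_nonneg _ _
      · have hN : n + 1 < 2 ^ (n + 1) := Nat.lt_two_pow_self
        obtain ⟨m', hm'⟩ : ∃ m', 2 ^ (n + 1) - 1 = n + m' + 1 :=
          ⟨2 ^ (n + 1) - n - 2, by omega⟩
        have hNm : (n + 1) + (m' + 1) = 2 ^ (n + 1) := by omega
        have key : P i x ^ (n + 1) * P i x ^ (m' + 1)
            ≤ P i (nupow x n) * P i x ^ (m' + 1) := by
          calc P i x ^ (n + 1) * P i x ^ (m' + 1) = P i x ^ 2 ^ (n + 1) := by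
                rw [← pow_add, hNm]
            _ = P i (nupow x (2 ^ (n + 1) - 1)) := (h2 (n + 1)).symm
            _ = P i (nupow x n * nupow x m') := by rw [hm', nupow_add]
            _ ≤ P i (nupow x n) * P i (nupow x m') := hPmul i _ _
            _ ≤ P i (nupow x n) * P i x ^ (m' + 1) :=
                mul_le_mul_of_nonneg_left (hub m') (apply_nonneg _ _)
        exact le_of_mul_le_mul_right key (pow_pos h0 _)
    exact le_antisymm (hub n) hlb
  -- Step 2: uniform bound for each element
  have key : ∀ x : A, ∃ M : ℝ, 0 ≤ M ∧ ∀ i, P i x ≤ M := by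
    intro x
    obtain ⟨M, hM⟩ := (Metric.isBounded_iff_subset_closedBall 0).mp (hsb x)
    have hq : ∀ z ∈ quasispectrum ℂ x, ‖z‖ ≤ M := fun z hz => by
      simpa [Metric.mem_closedBall, dist_zero_right] using hM hz
    have hM0 : 0 ≤ M := by simpa using hq 0 (quasispectrum.zero_mem ℂ x)
    exact ⟨M, hM0, fun i =>
      aux_seminorm_le_of_quasispectrum (P i) (hPmul i) x hM0 (fun n => hpow i x n) hq⟩
  choose M hM0 hMb using key
  have bdd : ∀ x : A, BddAbove (Set.range fun i => P i x) := fun x =>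
    ⟨M x, by rintro _ ⟨i, rfl⟩; exact hMb x i⟩
  -- Step 3: define Q as the pointwise supremum
  let Q : Seminorm ℂ A := Seminorm.of (fun x => ⨆ i, P i x)
    (fun x y => ciSup_le fun i => (map_add_le_add (P i) x y).trans
      (add_le_add (le_ciSup (bdd x) i) (le_ciSup (bdd y) i)))
    (fun c x => by
      have h1 : (fun i => P i (c • x)) = fun i => ‖c‖ * P i x :=
        funext fun i => map_smul_eq_mul (P i) c x
      show (⨆ i, P i (c • x)) = ‖c‖ * ⨆ i, P i x
      rw [h1, ← Real.mul_iSup_of_nonneg (norm_nonneg c)])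
  have hQ_le : ∀ (i : ι) (x : A), P i x ≤ Q x := fun i x => le_ciSup (bdd x) i
  have hQ_sup_le : ∀ (x : A) (a : ℝ), (∀ i, P i x ≤ a) → Q x ≤ a := fun x a h =>
    ciSup_le h
  refine ⟨Q, ?_, ?_, ?_, ?_⟩
  · -- norm property
    intro x hx
    by_contra hx0
    obtain ⟨i, hi⟩ := hP.separating_of_T1 x hx0
    exact hi (le_antisymm (hx ▸ hQ_le i x) (apply_nonneg _ _))
  · -- submultiplicative
    intro x y
    refine hQ_sup_le _ _ fun i => (hPmul i x y).trans ?_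
    exact mul_le_mul (hQ_le i x) (hQ_le i y) (apply_nonneg _ _) (apply_nonneg Q x)
  · -- square property
    intro x
    refine le_antisymm (hQ_sup_le _ _ fun i => ?_) ?_
    · rw [hPsq i x]
      exact mul_le_mul (hQ_le i x) (hQ_le i x) (apply_nonneg _ _) (apply_nonneg Q x)
    · have hsq : Q x ≤ Real.sqrt (Q (x * x)) := by
        refine hQ_sup_le _ _ fun i => ?_
        have h1 : P i x = Real.sqrt (P i (x * x)) := by
          rw [hPsq i x, Real.sqrt_mul_self (apply_nonneg _ _)]
        rw [h1]
        exact Real.sqrt_le_sqrt (hQ_le i (x * x))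
      calc Q x * Q x ≤ Real.sqrt (Q (x * x)) * Real.sqrt (Q (x * x)) :=
            mul_le_mul hsq hsq (apply_nonneg Q x) (Real.sqrt_nonneg _)
        _ = Q (x * x) := Real.mul_self_sqrt (apply_nonneg Q _)
  · -- Q induces the topology
    have hPc : ∀ i, Continuous (P i) := fun i => hP.continuous_seminorm i
    have hQlsc : LowerSemicontinuous (Q : A → ℝ) :=
      lowerSemicontinuous_ciSup bdd fun i => (hPc i).lowerSemicontinuous
    have hQc : Continuous Q := Seminorm.continuous_of_lowerSemicontinuous Q hQlsc
    have htag : IsTopologicalAddGroup A := hP.topologicalAddGroup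
    refine SeminormFamily.withSeminorms_of_hasBasis _ ?_
    constructor
    intro U
    constructor
    · intro hU
      obtain ⟨V, hV, hVU⟩ := hP.hasBasis.mem_iff.mp hU
      obtain ⟨s, r, hr, rfl⟩ := (SeminormFamily.basisSets_iff P).mp hV
      refine ⟨Q.ball 0 r, ?_, ?_⟩
      · have h1 := SeminormFamily.basisSets_mem (fun _ : Fin 1 => Q) {0} hr
        rwa [Finset.sup_singleton] at h1
      · refine subset_trans ?_ hVU
        intro z hz
        simp only [id_eq] at hz ⊢
        rw [Seminorm.mem_ball_zero] at hz ⊢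
        refine lt_of_le_of_lt ?_ hz
        exact Seminorm.finset_sup_apply_le (apply_nonneg Q z) fun i _ => hQ_le i z
    · rintro ⟨V, hV, hVU⟩
      obtain ⟨s, r, hr, rfl⟩ := (SeminormFamily.basisSets_iff (fun _ : Fin 1 => Q)).mp hV
      refine Filter.mem_of_superset ?_ hVU
      have hsub : Q.ball 0 r ⊆ (s.sup fun _ : Fin 1 => Q).ball 0 r := by
        intro z hz
        rw [Seminorm.mem_ball_zero] at hz ⊢
        refine lt_of_le_of_lt ?_ hz
        exact Seminorm.finset_sup_apply_le (apply_nonneg Q z) fun _ _ => le_refl _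
      exact Filter.mem_of_superset (Seminorm.ball_mem_nhds hQc hr) hsub
end

section
/- Let A be a complex topological algebra and let p be a uniform seminorm on A (a submultiplicative seminorm with p(x²) = p(x)² for all x). Then p(x) ≤ r_A(x) for every x ∈ A, where r_A(x) is the spectral radius of x. -/
open scoped ENNReal

/-- Type synonym on which we will install the seminormed ring structure coming from the
uniform seminorm `p` (extended to the unitization). -/
private def UniformSeminormAux (A : Type*) (_p : A → ℝ) : Type _ := Unitization ℂ A

/-- Let `A` be a complex topological algebra and `p` a uniform seminorm on `A`
(a submultiplicative seminorm with the square property). Then `p x ≤ r_A x`,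
where `r_A x = sup {‖λ‖ : λ ∈ sp_A x}` is the spectral radius of `x`
(the spectrum being computed in the unitization). -/
theorem uniform_seminorm_le_spectralRadius {A : Type*} [NonUnitalRing A]
    [Module ℂ A] [SMulCommClass ℂ A A] [IsScalarTower ℂ A A]
    [TopologicalSpace A] [IsTopologicalAddGroup A] [ContinuousSMul ℂ A]
    (hmull : ∀ a : A, Continuous fun x => a * x)
    (hmulr : ∀ a : A, Continuous fun x => x * a)
    (p : A → ℝ)
    (hadd : ∀ x y, p (x + y) ≤ p x + p y)
    (hsmul : ∀ (c : ℂ) (x : A), p (c • x) = ‖c‖ * p x)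
    (hmul : ∀ x y, p (x * y) ≤ p x * p y)
    (hsq : ∀ x, p (x * x) = p x * p x) :
    ∀ x : A, ENNReal.ofReal (p x) ≤ ⨆ lam ∈ quasispectrum ℂ x, (‖lam‖₊ : ℝ≥0∞) := by
  classical
  -- basic facts about `p`
  have p0 : p 0 = 0 := by simpa using hsmul 0 0
  have pneg : ∀ y, p (-y) = p y := fun y => by simpa using hsmul (-1) y
  have pnn : ∀ y, 0 ≤ p y := by
    intro y
    have h := hadd y (-y)
    rw [add_neg_cancel, p0, pneg] at h
    linarith
  intro x
  rcases le_or_gt (p x) 0 with hx | hx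
  · rw [ENNReal.ofReal_of_nonpos hx]
    exact zero_le
  -- powers of `x` inside the non-unital algebra `A`
  set w : ℕ → A := fun n => Nat.rec x (fun _ z => z * x) n with hwdef
  have hw0 : w 0 = x := rfl
  have hwS : ∀ n, w (n + 1) = w n * x := fun n => rfl
  have hwle : ∀ n, p (w n) ≤ p x ^ (n + 1) := by
    intro n
    induction n with
    | zero => simp [hw0]
    | succ n ih =>
      have h1 : p (w (n + 1)) ≤ p (w n) * p x := by rw [hwS]; exact hmul _ _
      have h2 : p (w n) * p x ≤ p x ^ (n + 1) * p x :=
        mul_le_mul_of_nonneg_right ih (pnn x)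
      calc p (w (n + 1)) ≤ p x ^ (n + 1) * p x := h1.trans h2
        _ = p x ^ (n + 1 + 1) := by ring
  have hwadd : ∀ m n, w (n + m + 1) = w n * w m := by
    intro m
    induction m with
    | zero => intro n; simpa [hw0] using hwS n
    | succ m ih =>
      intro n
      have h : n + (m + 1) + 1 = (n + m + 1) + 1 := by omega
      rw [h, hwS m, hwS (n + m + 1), ih, mul_assoc]
  have hw2 : ∀ k, p (w (2 ^ k - 1)) = p x ^ (2 ^ k) := by
    intro k
    induction k with
    | zero => simp [hw0]
    | succ k ih =>
      have hk : 1 ≤ 2 ^ k := Nat.one_le_two_pow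
      have h1 : (2 : ℕ) ^ (k + 1) - 1 = (2 ^ k - 1) + (2 ^ k - 1) + 1 := by
        have : (2 : ℕ) ^ (k + 1) = 2 ^ k + 2 ^ k := by rw [pow_succ]; ring
        omega
      have h2 : p x ^ (2 ^ k) * p x ^ (2 ^ k) = p x ^ (2 ^ (k + 1)) := by
        rw [← pow_add]
        congr 1
        rw [pow_succ]; ring
      rw [h1, hwadd, hsq, ih, h2]
  have hwge : ∀ n, p x ^ (n + 1) ≤ p (w n) := by
    intro n
    have hk : n + 2 < 2 ^ (n + 2) := Nat.lt_two_pow_self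
    set k := n + 2 with hkdef
    set m := 2 ^ k - n - 2 with hmdef
    have hmn : (2 : ℕ) ^ k - 1 = n + m + 1 := by omega
    have h1 : p x ^ (2 ^ k) = p (w n * w m) := by rw [← hwadd, ← hmn, hw2]
    have h2 : p (w n * w m) ≤ p (w n) * p x ^ (m + 1) :=
      (hmul _ _).trans (mul_le_mul_of_nonneg_left (hwle m) (pnn _))
    have h3 : p x ^ (2 ^ k) = p x ^ (n + 1) * p x ^ (m + 1) := by
      rw [← pow_add]
      congr 1
      omega
    have h4 : (0 : ℝ) < p x ^ (m + 1) := pow_pos hx _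
    have h5 : p x ^ (n + 1) * p x ^ (m + 1) ≤ p (w n) * p x ^ (m + 1) := by
      rw [← h3, h1]; exact h2
    exact le_of_mul_le_mul_right h5 h4
  have hpw : ∀ n, p (w n) = p x ^ (n + 1) := fun n => le_antisymm (hwle n) (hwge n)
  -- the unitization and the seminorm `q` on it
  set u : Unitization ℂ A := (x : Unitization ℂ A) with hu
  have hupow : ∀ n : ℕ, u ^ (n + 1) = ((w n : A) : Unitization ℂ A) := by
    intro n
    induction n with
    | zero => simp [hu, hw0]
    | succ n ih => rw [pow_succ, ih, hwS, Unitization.inr_mul]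
  set q : Unitization ℂ A → ℝ := fun v => ‖v.fst‖ + p v.snd with hq
  have hq0 : q 0 = 0 := by simp [hq, p0]
  have hqadd : ∀ v₁ v₂, q (v₁ + v₂) ≤ q v₁ + q v₂ := by
    intro v₁ v₂
    simp only [hq, Unitization.fst_add, Unitization.snd_add]
    have := norm_add_le v₁.fst v₂.fst
    have := hadd v₁.snd v₂.snd
    linarith
  have hqneg : ∀ v, q (-v) = q v := by
    intro v
    simp [hq, pneg]
  have hqmul : ∀ v₁ v₂, q (v₁ * v₂) ≤ q v₁ * q v₂ := by
    intro v₁ v₂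
    simp only [hq, Unitization.fst_mul, Unitization.snd_mul]
    have h1 : p (v₁.fst • v₂.snd + v₂.fst • v₁.snd + v₁.snd * v₂.snd) ≤
        ‖v₁.fst‖ * p v₂.snd + ‖v₂.fst‖ * p v₁.snd + p v₁.snd * p v₂.snd := by
      calc p (v₁.fst • v₂.snd + v₂.fst • v₁.snd + v₁.snd * v₂.snd)
          ≤ p (v₁.fst • v₂.snd) + p (v₂.fst • v₁.snd) + p (v₁.snd * v₂.snd) := by
            have ha := hadd (v₁.fst • v₂.snd + v₂.fst • v₁.snd) (v₁.snd * v₂.snd)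
            have hb := hadd (v₁.fst • v₂.snd) (v₂.fst • v₁.snd)
            linarith
        _ ≤ ‖v₁.fst‖ * p v₂.snd + ‖v₂.fst‖ * p v₁.snd + p v₁.snd * p v₂.snd := by
            rw [hsmul, hsmul]
            have := hmul v₁.snd v₂.snd
            linarith
    have h2 : ‖v₁.fst * v₂.fst‖ = ‖v₁.fst‖ * ‖v₂.fst‖ := norm_mul _ _
    have h3 := norm_nonneg v₁.fst
    have h4 := norm_nonneg v₂.fst
    have h5 := pnn v₁.snd
    have h6 := pnn v₂.snd
    nlinarith
  have hqsmul : ∀ (c : ℂ) (v : Unitization ℂ A), q (c • v) = ‖c‖ * q v := by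
    intro c v
    simp only [hq, Unitization.fst_smul, Unitization.snd_smul, hsmul, norm_smul]
    ring
  have hqu : ∀ n, q (u ^ (n + 1)) = p x ^ (n + 1) := by
    intro n
    rw [hupow n]
    simp [hq, hpw n]
  -- the seminormed ring structure on the type synonym
  letI instRingT : Ring (UniformSeminormAux A p) := (inferInstance : Ring (Unitization ℂ A))
  letI instAlgT : Algebra ℂ (UniformSeminormAux A p) :=
    (inferInstance : Algebra ℂ (Unitization ℂ A))
  letI sg : SeminormedAddCommGroup (UniformSeminormAux A p) :=
    AddGroupSeminorm.toSeminormedAddCommGroup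
      { toFun := fun v => q v
        map_zero' := hq0
        add_le' := hqadd
        neg' := hqneg }
  letI instSRT : SeminormedRing (UniformSeminormAux A p) :=
    { sg, instRingT with norm_mul_le := hqmul }
  letI instNST : NormedSpace ℂ (UniformSeminormAux A p) :=
    { (inferInstance : Module ℂ (Unitization ℂ A)) with
      norm_smul_le := fun c v => le_of_eq (hqsmul c v) }
  letI instNAD : NormedAlgebra ℂ (UniformSpace.Completion (UniformSeminormAux A p)) :=
    { (inferInstance : Algebra ℂ (UniformSpace.Completion (UniformSeminormAux A p))) with
      norm_smul_le := fun c v => norm_smul_le c v }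
  -- the algebra homomorphism into the completion
  let φ : UniformSeminormAux A p →ₐ[ℂ] UniformSpace.Completion (UniformSeminormAux A p) :=
    AlgHom.mk' UniformSpace.Completion.coeRingHom
      (fun c v => UniformSpace.Completion.coe_smul c v)
  let t : UniformSeminormAux A p := u
  -- the norms of powers of `φ t`
  have hnorm : ∀ n : ℕ, (‖φ t ^ (n + 1)‖₊ : ℝ≥0∞) = ENNReal.ofReal (p x) ^ (n + 1) := by
    intro n
    have h1 : φ t ^ (n + 1) = φ (t ^ (n + 1)) := (map_pow φ t (n + 1)).symm
    have h2 : φ (t ^ (n + 1)) = ((t ^ (n + 1) : UniformSeminormAux A p) :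
        UniformSpace.Completion (UniformSeminormAux A p)) := rfl
    rw [h1, h2, UniformSpace.Completion.nnnorm_coe]
    have h3 : ‖(t ^ (n + 1) : UniformSeminormAux A p)‖ = q (u ^ (n + 1)) := rfl
    have h4 : (‖(t ^ (n + 1) : UniformSeminormAux A p)‖₊ : ℝ≥0∞) =
        ENNReal.ofReal ‖(t ^ (n + 1) : UniformSeminormAux A p)‖ :=
      (ofReal_norm _).symm
    rw [h4, h3, hqu n, ENNReal.ofReal_pow (pnn x)]
  -- Gelfand's formula identifies the spectral radius of `φ t` with `p x`
  have hgel := spectrum.pow_nnnorm_pow_one_div_tendsto_nhds_spectralRadius (φ t)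
  have hconst : Filter.Tendsto (fun n : ℕ => (‖φ t ^ n‖₊ : ℝ≥0∞) ^ (1 / (n : ℝ)))
      Filter.atTop (nhds (ENNReal.ofReal (p x))) := by
    have hev : ∀ᶠ n : ℕ in Filter.atTop,
        (fun _ : ℕ => ENNReal.ofReal (p x)) n =
          (fun n : ℕ => (‖φ t ^ n‖₊ : ℝ≥0∞) ^ (1 / (n : ℝ))) n := by
      filter_upwards [Filter.eventually_ge_atTop 1] with n hn
      obtain ⟨m, rfl⟩ : ∃ m, n = m + 1 := ⟨n - 1, by omega⟩
      have hne : ((m + 1 : ℕ) : ℝ) ≠ 0 := by positivity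
      rw [hnorm m, ← ENNReal.rpow_natCast, ← ENNReal.rpow_mul, mul_one_div,
        div_self hne, ENNReal.rpow_one]
    exact Filter.Tendsto.congr' hev tendsto_const_nhds
  have heq : spectralRadius ℂ (φ t) = ENNReal.ofReal (p x) :=
    tendsto_nhds_unique hgel hconst
  -- spectral inclusion
  rw [Unitization.quasispectrum_eq_spectrum_inr' ℂ ℂ x]
  have hts : spectrum ℂ t = spectrum ℂ (x : Unitization ℂ A) := rfl
  have hsub : spectrum ℂ (φ t) ⊆ spectrum ℂ (x : Unitization ℂ A) := by
    intro k hk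
    exact hts ▸ AlgHom.spectrum_apply_subset φ t hk
  calc ENNReal.ofReal (p x) = spectralRadius ℂ (φ t) := heq.symm
    _ ≤ ⨆ lam ∈ spectrum ℂ (x : Unitization ℂ A), (‖lam‖₊ : ℝ≥0∞) := by
        refine iSup₂_le fun k hk => ?_
        exact le_iSup₂ (f := fun (k : ℂ) (_ : k ∈ spectrum ℂ (x : Unitization ℂ A)) =>
          (‖k‖₊ : ℝ≥0∞)) k (hsub hk)
end

section
/- Let A be a complex topological algebra which is a Q-algebra (its set of quasi-invertible elements is open). Then every uniform seminorm p on A (submultiplicative seminorm with p(x²) = p(x)²) is continuous. -/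
open UniformSpace Filter Topology

/-- The completion of a (possibly noncommutative) seminormed complex algebra is a
normed algebra. -/
noncomputable instance auxCompletionNormedAlgebra {E : Type*} [SeminormedRing E]
    [NormedAlgebra ℂ E] : NormedAlgebra ℂ (Completion E) :=
  { (inferInstance : Algebra ℂ (Completion E)) with
    norm_smul_le := fun c x => norm_smul_le c x }

/-- Key abstract lemma: if `z` in a seminormed unital complex algebra satisfies the square
property for its norm along powers of two, and `c - z` is a unit for all `‖c‖ > 1`,
then `‖z‖ ≤ 1`. -/
theorem aux_norm_le_one {E : Type*} [SeminormedRing E] [NormedAlgebra ℂ E] (z : E)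
    (hz : ∀ k : ℕ, ‖z ^ 2 ^ k‖ = ‖z‖ ^ 2 ^ k)
    (hspec : ∀ c : ℂ, 1 < ‖c‖ → IsUnit (algebraMap ℂ E c - z)) :
    ‖z‖ ≤ 1 := by
  set b : Completion E := (z : Completion E) with hb
  have hbn : ‖b‖ = ‖z‖ := Completion.norm_coe z
  have hbpow : ∀ k : ℕ, ‖b ^ 2 ^ k‖₊ = ‖b‖₊ ^ 2 ^ k := by
    intro k
    have hcoe : ((z ^ 2 ^ k : E) : Completion E) = b ^ 2 ^ k := by
      rw [hb]
      exact map_pow (Completion.coeRingHom : E →+* Completion E) z (2 ^ k)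
    ext
    push_cast
    rw [← hcoe, Completion.norm_coe, hz k, hbn]
  -- Gelfand formula along the subsequence of powers of two
  have htendsto := spectrum.pow_nnnorm_pow_one_div_tendsto_nhds_spectralRadius b
  have hmono : Tendsto (fun k : ℕ => 2 ^ k) atTop atTop :=
    tendsto_atTop_mono (fun n => (Nat.lt_two_pow_self (n := n)).le) tendsto_id
  have hsub : Tendsto (fun k : ℕ => (‖b ^ 2 ^ k‖₊ : ENNReal) ^ (1 / ((2 ^ k : ℕ) : ℝ)))
      atTop (𝓝 (spectralRadius ℂ b)) := htendsto.comp hmono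
  have hconst : (fun k : ℕ => (‖b ^ 2 ^ k‖₊ : ENNReal) ^ (1 / ((2 ^ k : ℕ) : ℝ)))
      = fun _ => (‖b‖₊ : ENNReal) := by
    funext k
    rw [hbpow k]
    push_cast
    rw [← ENNReal.rpow_natCast ((‖b‖₊ : ENNReal)) (2 ^ k), ← ENNReal.rpow_mul]
    norm_num
  rw [hconst] at hsub
  have heq : spectralRadius ℂ b = (‖b‖₊ : ENNReal) :=
    tendsto_nhds_unique hsub tendsto_const_nhds
  have hr : spectralRadius ℂ b ≤ 1 := by
    show (⨆ c ∈ spectrum ℂ b, (‖c‖₊ : ENNReal)) ≤ 1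
    refine iSup₂_le fun c hc => ?_
    by_contra h
    push_neg at h
    have hc1 : 1 < ‖c‖ := by
      have : (1 : NNReal) < ‖c‖₊ := by exact_mod_cast h
      exact_mod_cast this
    have hunit := (hspec c hc1).map (Completion.coeRingHom : E →+* Completion E)
    rw [map_sub] at hunit
    have halg : (Completion.coeRingHom : E →+* Completion E) (algebraMap ℂ E c)
        = algebraMap ℂ (Completion E) c := rfl
    rw [halg] at hunit
    exact spectrum.mem_iff.mp hc hunit
  rw [heq] at hr
  have : ‖z‖₊ ≤ 1 := by
    rw [hb] at hr
    rw [Completion.nnnorm_coe] at hr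
    exact_mod_cast hr
  exact_mod_cast this

section Aux

variable {A : Type*} [NonUnitalRing A] [Module ℂ A] [SMulCommClass ℂ A A] [IsScalarTower ℂ A A]

theorem aux_p_le_one (p : A → ℝ)
    (hadd : ∀ x y, p (x + y) ≤ p x + p y)
    (hsmul : ∀ (c : ℂ) (x : A), p (c • x) = ‖c‖ * p x)
    (hmul : ∀ x y, p (x * y) ≤ p x * p y)
    (hsq : ∀ x, p (x * x) = p x * p x)
    (x : A) (hx : ∀ c : ℂ, 1 < ‖c‖ → IsQuasiInv (c⁻¹ • x)) : p x ≤ 1 := by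
  have p0 : p 0 = 0 := by
    have := hsmul 0 0
    simpa using this
  have pneg : ∀ u : A, p (-u) = p u := by
    intro u
    have := hsmul (-1) u
    simpa using this
  have pnonneg : ∀ u : A, 0 ≤ p u := by
    intro u
    have h1 : p (u + -u) ≤ p u + p (-u) := hadd u (-u)
    rw [add_neg_cancel, p0, pneg] at h1
    linarith
  -- the seminorm on the unitization
  set q : Unitization ℂ A → ℝ := fun w => ‖w.fst‖ + p w.snd with hq
  letI sg : SeminormedAddCommGroup (Unitization ℂ A) :=
    AddGroupSeminorm.toSeminormedAddCommGroup
      { toFun := q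
        map_zero' := by simp [hq, p0]
        add_le' := fun r s => by
          simp only [hq, Unitization.fst_add, Unitization.snd_add]
          calc ‖r.fst + s.fst‖ + p (r.snd + s.snd)
              ≤ (‖r.fst‖ + ‖s.fst‖) + (p r.snd + p s.snd) :=
                add_le_add (norm_add_le _ _) (hadd _ _)
            _ = _ := by ring
        neg' := fun r => by simp [hq, Unitization.fst_neg, Unitization.snd_neg, pneg] }
  letI sr : SeminormedRing (Unitization ℂ A) :=
    { sg, (inferInstance : Ring (Unitization ℂ A)) with
      norm_mul_le := fun a b => by
        show q (a * b) ≤ q a * q b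
        simp only [hq, Unitization.fst_mul, Unitization.snd_mul]
        have h1 : p (a.fst • b.snd + b.fst • a.snd + a.snd * b.snd)
            ≤ ‖a.fst‖ * p b.snd + ‖b.fst‖ * p a.snd + p a.snd * p b.snd := by
          calc p (a.fst • b.snd + b.fst • a.snd + a.snd * b.snd)
              ≤ p (a.fst • b.snd) + p (b.fst • a.snd) + p (a.snd * b.snd) :=
                le_trans (hadd _ _) (by gcongr; exact hadd _ _)
            _ ≤ ‖a.fst‖ * p b.snd + ‖b.fst‖ * p a.snd + p a.snd * p b.snd := by
                rw [hsmul, hsmul]; gcongr; exact hmul _ _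
        calc ‖a.fst * b.fst‖ + p (a.fst • b.snd + b.fst • a.snd + a.snd * b.snd)
            ≤ ‖a.fst‖ * ‖b.fst‖ + (‖a.fst‖ * p b.snd + ‖b.fst‖ * p a.snd
              + p a.snd * p b.snd) := add_le_add (norm_mul_le _ _) h1
          _ = (‖a.fst‖ + p a.snd) * (‖b.fst‖ + p b.snd) := by ring }
  letI na : NormedAlgebra ℂ (Unitization ℂ A) :=
    { (inferInstance : Algebra ℂ (Unitization ℂ A)) with
      norm_smul_le := fun c w => by
        show q (c • w) ≤ ‖c‖ * q w
        simp only [hq, Unitization.fst_smul, Unitization.snd_smul, hsmul, norm_smul]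
        rw [mul_add] }
  set z : Unitization ℂ A := Unitization.inr x with hz
  have hnorm : ‖z‖ = p x := by
    show q z = p x
    simp [hq, hz]
  have hzpow : ∀ k : ℕ, ‖z ^ 2 ^ k‖ = ‖z‖ ^ 2 ^ k := by
    have key : ∀ k : ℕ, ∃ w : A, z ^ 2 ^ k = Unitization.inr w ∧ p w = p x ^ 2 ^ k := by
      intro k
      induction k with
      | zero => exact ⟨x, by simp [hz], by simp⟩
      | succ k ih =>
        obtain ⟨w, hw1, hw2⟩ := ih
        refine ⟨w * w, ?_, ?_⟩
        · rw [show (2 : ℕ) ^ (k + 1) = 2 ^ k * 2 from by ring, pow_mul, hw1, sq,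
            Unitization.inr_mul]
        · rw [hsq, hw2, show (2 : ℕ) ^ (k + 1) = 2 ^ k * 2 from by ring, pow_mul, sq]
    intro k
    obtain ⟨w, hw1, hw2⟩ := key k
    rw [hw1, hnorm]
    show q _ = _
    simp [hq, hw2]
  have hspec : ∀ c : ℂ, 1 < ‖c‖ → IsUnit (algebraMap ℂ (Unitization ℂ A) c - z) := by
    intro c hc
    have hc0 : c ≠ 0 := by
      intro h; rw [h, norm_zero] at hc; linarith
    obtain ⟨y, hy1, hy2⟩ := hx c hc
    set a : Unitization ℂ A := Unitization.inr (c⁻¹ • x) with ha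
    set d : Unitization ℂ A := Unitization.inr y with hd
    have hab : a + d - a * d = 0 := by
      rw [ha, hd, ← Unitization.inr_mul, ← Unitization.inr_add, ← Unitization.inr_sub, hy1,
        Unitization.inr_zero]
    have hba : d + a - d * a = 0 := by
      rw [ha, hd, ← Unitization.inr_mul, ← Unitization.inr_add, ← Unitization.inr_sub, hy2,
        Unitization.inr_zero]
    have hu : IsUnit ((1 : Unitization ℂ A) - a) := by
      refine ⟨⟨1 - a, 1 - d, ?_, ?_⟩, rfl⟩
      · have : (1 - a) * (1 - d) = 1 - (a + d - a * d) := by noncomm_ring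
        rw [this, hab, sub_zero]
      · have : (1 - d) * (1 - a) = 1 - (d + a - d * a) := by noncomm_ring
        rw [this, hba, sub_zero]
    have hrw : algebraMap ℂ (Unitization ℂ A) c - z = c • ((1 : Unitization ℂ A) - a) := by
      rw [smul_sub, ha, ← Unitization.inr_smul, smul_smul, mul_inv_cancel₀ hc0, one_smul,
        Algebra.smul_def, mul_one, hz]
    rw [hrw, Algebra.smul_def]
    exact ((isUnit_iff_ne_zero.mpr hc0).map (algebraMap ℂ (Unitization ℂ A))).mul hu
  have := aux_norm_le_one z hzpow hspec
  rwa [hnorm] at this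

end Aux

/-- Let `A` be a complex topological algebra which is a Q-algebra (its set of
quasi-invertible elements is open). Then every uniform seminorm on `A`
(submultiplicative with the square property) is continuous. -/
theorem uniform_seminorm_continuous_of_qAlgebra {A : Type*} [NonUnitalRing A]
    [Module ℂ A] [SMulCommClass ℂ A A] [IsScalarTower ℂ A A]
    [TopologicalSpace A] [IsTopologicalAddGroup A] [ContinuousSMul ℂ A]
    (hmull : ∀ a : A, Continuous fun x => a * x)
    (hmulr : ∀ a : A, Continuous fun x => x * a)
    (hQ : IsOpen {x : A | IsQuasiInv x})
    (p : A → ℝ)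
    (hadd : ∀ x y, p (x + y) ≤ p x + p y)
    (hsmul : ∀ (c : ℂ) (x : A), p (c • x) = ‖c‖ * p x)
    (hmul : ∀ x y, p (x * y) ≤ p x * p y)
    (hsq : ∀ x, p (x * x) = p x * p x) :
    Continuous p := by
  have p0 : p 0 = 0 := by
    have := hsmul 0 0
    simpa using this
  have pneg : ∀ u : A, p (-u) = p u := by
    intro u
    have := hsmul (-1) u
    simpa using this
  -- a balanced neighborhood of 0 consisting of quasi-invertible elements
  have h0 : (0 : A) ∈ {x : A | IsQuasiInv x} := ⟨0, by simp, by simp⟩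
  have hnhds : {x : A | IsQuasiInv x} ∈ 𝓝 (0 : A) := hQ.mem_nhds h0
  set V : Set A := balancedCore ℂ {x : A | IsQuasiInv x} with hV
  have hVnhds : V ∈ 𝓝 (0 : A) := balancedCore_mem_nhds_zero hnhds
  have hVsub : V ⊆ {x : A | IsQuasiInv x} := balancedCore_subset _
  have hVbal : Balanced ℂ V := balancedCore_balanced _
  -- p is bounded by 1 on V
  have hbound : ∀ x ∈ V, p x ≤ 1 := by
    intro x hxV
    refine aux_p_le_one p hadd hsmul hmul hsq x fun c hc => ?_
    have hmem : c⁻¹ • x ∈ V := by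
      have h1 : ‖c⁻¹‖ ≤ 1 := by
        rw [norm_inv]
        rw [inv_le_one_iff₀]
        right; linarith
      exact hVbal.smul_mem h1 hxV
    exact hVsub hmem
  -- continuity
  rw [continuous_iff_continuousAt]
  intro a
  rw [ContinuousAt, Metric.tendsto_nhds]
  intro ε hε
  set c : ℂ := ((ε / 2 : ℝ) : ℂ) with hc
  have hc0 : c ≠ 0 := by
    simp only [hc, ne_eq, Complex.ofReal_eq_zero]
    positivity
  have hcn : ‖c‖ = ε / 2 := by
    rw [hc, Complex.norm_real, Real.norm_of_nonneg (by positivity)]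
  have hcont : Continuous fun x : A => (c⁻¹ : ℂ) • (x - a) :=
    ((continuous_id.sub continuous_const).const_smul _)
  have hmem : ∀ᶠ x in 𝓝 a, (c⁻¹ : ℂ) • (x - a) ∈ V := by
    have : Tendsto (fun x : A => (c⁻¹ : ℂ) • (x - a)) (𝓝 a) (𝓝 0) := by
      have h0' : (c⁻¹ : ℂ) • ((a : A) - a) = 0 := by simp
      simpa [h0'] using (hcont.tendsto a)
    exact this hVnhds
  filter_upwards [hmem] with x hx
  have hsmall : p (x - a) ≤ ε / 2 := by
    have : x - a = c • ((c⁻¹ : ℂ) • (x - a)) := by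
      rw [smul_smul, mul_inv_cancel₀ hc0, one_smul]
    rw [this, hsmul, hcn]
    have := hbound _ hx
    nlinarith [hε]
  have habs : |p x - p a| ≤ p (x - a) := by
    rw [abs_sub_le_iff]
    constructor
    · have h1 : p x ≤ p (x - a) + p a := by
        have := hadd (x - a) a
        simpa using this
      linarith
    · have h2 : p a ≤ p (a - x) + p x := by
        have := hadd (a - x) x
        simpa using this
      have h3 : p (a - x) = p (x - a) := by
        rw [← neg_sub x a, pneg]
      linarith
  rw [Real.dist_eq]
  calc |p x - p a| ≤ p (x - a) := habs
    _ ≤ ε / 2 := hsmall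
    _ < ε := by linarith
end

section
/- Let A be a commutative complex algebra and let p be a uniform seminorm on A (a submultiplicative seminorm with p(x²) = p(x)² for all x). Then for every x ∈ A, p(x) = sup{|f(x)| : f a multiplicative linear functional on A with |f(y)| ≤ p(y) for all y ∈ A}. -/
open UniformSpace WeakDual
open scoped NNReal ENNReal

/-- Let `A` be a commutative complex algebra and `p` a uniform seminorm on `A`
(a submultiplicative seminorm with the square property). Then for every `x ∈ A`,
`p x = sup {‖f x‖ : f a multiplicative linear functional on A with ‖f y‖ ≤ p y for all y}`. -/
theorem uniform_seminorm_eq_sup_dominated_characters {A : Type*} [NonUnitalCommRing A]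
    [Module ℂ A] [SMulCommClass ℂ A A] [IsScalarTower ℂ A A]
    (p : A → ℝ)
    (hadd : ∀ x y, p (x + y) ≤ p x + p y)
    (hsmul : ∀ (c : ℂ) (x : A), p (c • x) = ‖c‖ * p x)
    (hmul : ∀ x y, p (x * y) ≤ p x * p y)
    (hsq : ∀ x, p (x * x) = p x * p x) :
    ∀ x : A, p x = sSup ((fun f : A → ℂ => ‖f x‖) ''
      {f : A → ℂ | (∀ y z, f (y + z) = f y + f z) ∧
        (∀ (c : ℂ) (y : A), f (c • y) = c * f y) ∧
        (∀ y z, f (y * z) = f y * f z) ∧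
        (∀ y, ‖f y‖ ≤ p y)}) := by
  have pzero : p 0 = 0 := by
    have h := hsmul 0 0
    simpa using h
  have pneg : ∀ y, p (-y) = p y := fun y => by
    have h := hsmul (-1) y
    simpa using h
  have pnonneg : ∀ y, 0 ≤ p y := fun y => by
    have h := hadd y (-y)
    rw [add_neg_cancel, pzero, pneg] at h
    linarith
  intro x
  -- put the ℓ¹ seminorm on the unitization
  letI sg : SeminormedAddCommGroup (Unitization ℂ A) :=
    AddGroupSeminorm.toSeminormedAddCommGroup
      { toFun := fun u => ‖u.fst‖ + p u.snd
        map_zero' := by simp [pzero]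
        add_le' := fun u v => by
          have h1 := hadd u.snd v.snd
          have h2 := norm_add_le u.fst v.fst
          simp only [Unitization.fst_add, Unitization.snd_add]
          linarith
        neg' := fun u => by simp [pneg] }
  have hnorm : ∀ u : Unitization ℂ A, ‖u‖ = ‖u.fst‖ + p u.snd := fun _ => rfl
  letI : SeminormedCommRing (Unitization ℂ A) :=
    { sg, (inferInstance : CommRing (Unitization ℂ A)) with
      norm_mul_le := fun u v => by
        rw [hnorm, hnorm, hnorm, Unitization.fst_mul, Unitization.snd_mul]
        have h1 : p (u.fst • v.snd + v.fst • u.snd + u.snd * v.snd)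
            ≤ p (u.fst • v.snd) + p (v.fst • u.snd) + p (u.snd * v.snd) :=
          (hadd _ _).trans (by have := hadd (u.fst • v.snd) (v.fst • u.snd); linarith)
        have h2 := hsmul u.fst v.snd
        have h3 := hsmul v.fst u.snd
        have h4 := hmul u.snd v.snd
        have h5 : ‖u.fst * v.fst‖ = ‖u.fst‖ * ‖v.fst‖ := norm_mul _ _
        have h6 := pnonneg u.snd
        have h7 := pnonneg v.snd
        have h8 := norm_nonneg u.fst
        have h9 := norm_nonneg v.fst
        nlinarith }
  letI : NormedAlgebra ℂ (Unitization ℂ A) :=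
    { (inferInstance : Algebra ℂ (Unitization ℂ A)) with
      norm_smul_le := fun c u => by
        rw [hnorm, hnorm, Unitization.fst_smul, Unitization.snd_smul, hsmul, smul_eq_mul,
          norm_mul]
        ring_nf
        exact le_of_eq (by ring) }
  -- the completion is a commutative complex Banach algebra
  set C := Completion (Unitization ℂ A) with hC
  have hone : ‖(1 : C)‖ = 1 := by
    rw [← Completion.coe_one, Completion.norm_coe, hnorm]
    simp [pzero]
  haveI : NormOneClass C := ⟨hone⟩
  haveI : Nontrivial C := by
    refine ⟨1, 0, fun h => ?_⟩
    rw [h, norm_zero] at hone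
    norm_num at hone
  -- the natural map from A to C
  set e : A → C := fun y => ((y : Unitization ℂ A) : C) with he
  have he_norm : ∀ y, ‖e y‖ = p y := fun y => by
    rw [he]; rw [Completion.norm_coe, hnorm]
    simp
  have he_add : ∀ y z, e (y + z) = e y + e z := fun y z => by
    rw [he]; push_cast [Unitization.inr_add, Completion.coe_add]; rfl
  have he_mul : ∀ y z, e (y * z) = e y * e z := fun y z => by
    simp only [he]
    rw [Unitization.inr_mul, Completion.coe_mul]
  have he_smul : ∀ (c : ℂ) (y : A), e (c • y) = c • e y := fun c y => by
    simp only [he]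
    rw [Unitization.inr_smul, Completion.coe_smul]
  -- powers of e x
  set c : C := e x with hc
  set y : ℕ → A := fun k => (fun z => z * z)^[k] x with hy
  have hy0 : y 0 = x := rfl
  have hysucc : ∀ k, y (k + 1) = y k * y k := fun k => by
    rw [hy]; simp [Function.iterate_succ_apply']
  have hyc : ∀ k, e (y k) = c ^ 2 ^ k := by
    intro k
    induction k with
    | zero => simp [hy0, hc]
    | succ k ih =>
      rw [hysucc, he_mul, ih, pow_succ, pow_mul, sq]
  have hyp : ∀ k, p (y k) = p x ^ 2 ^ k := by
    intro k
    induction k with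
    | zero => simp [hy0]
    | succ k ih =>
      rw [hysucc, hsq, ih, pow_succ, pow_mul, sq]
  have key : ∀ k : ℕ, ‖c ^ 2 ^ k‖ = p x ^ 2 ^ k := fun k => by
    rw [← hyc, he_norm, hyp]
  -- Gelfand's formula: the spectral radius of c equals p x
  set r : ℝ≥0 := ⟨p x, pnonneg x⟩ with hr
  have hrad : spectralRadius ℂ c = (r : ENNReal) := by
    have h1 := spectrum.pow_nnnorm_pow_one_div_tendsto_nhds_spectralRadius c
    have h2 : Filter.Tendsto (fun k : ℕ => (2 : ℕ) ^ k) Filter.atTop Filter.atTop :=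
      tendsto_pow_atTop_atTop_of_one_lt one_lt_two
    have h3 := h1.comp h2
    have h4 : (fun k : ℕ => (‖c ^ (2 : ℕ) ^ k‖₊ : ENNReal) ^ (1 / ((2 : ℕ) ^ k : ℕ) : ℝ))
        = fun _ : ℕ => (r : ENNReal) := by
      funext k
      have hnn : ‖c ^ (2 : ℕ) ^ k‖₊ = r ^ (2 : ℕ) ^ k := by
        ext
        push_cast
        rw [key k]
        rfl
      rw [hnn]
      rw [ENNReal.coe_pow, ← ENNReal.rpow_natCast, ← ENNReal.rpow_mul]
      rw [mul_one_div, div_self (by positivity), ENNReal.rpow_one]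
    rw [show (fun n : ℕ => (‖c ^ n‖₊ : ENNReal) ^ (1 / n : ℝ)) ∘ (fun k : ℕ => (2:ℕ) ^ k)
        = fun k : ℕ => (‖c ^ (2:ℕ) ^ k‖₊ : ENNReal) ^ (1 / ((2:ℕ) ^ k : ℕ) : ℝ) from rfl,
      h4] at h3
    exact tendsto_nhds_unique h3 tendsto_const_nhds
  -- find a character attaining the spectral radius
  obtain ⟨z, hz, hznorm⟩ := spectrum.exists_nnnorm_eq_spectralRadius c
  obtain ⟨φ, hφ⟩ := WeakDual.CharacterSpace.mem_spectrum_iff_exists.mp hz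
  have hznorm' : ‖z‖ = p x := by
    rw [hrad] at hznorm
    have : ‖z‖₊ = r := by exact_mod_cast hznorm
    have h := congrArg NNReal.toReal this
    simp only [coe_nnnorm] at h
    exact h
  -- the functional
  refine le_antisymm ?_ ?_
  · refine le_csSup ⟨p x, ?_⟩ ?_
    · rintro w ⟨f, hf, rfl⟩
      exact hf.2.2.2 x
    · refine ⟨fun y => φ (e y), ⟨fun y z => ?_, fun c' y => ?_, fun y z => ?_, fun y => ?_⟩, ?_⟩
      · show φ (e (y + z)) = φ (e y) + φ (e z)
        rw [he_add, map_add]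
      · show φ (e (c' • y)) = c' * φ (e y)
        rw [he_smul, map_smul, smul_eq_mul]
      · show φ (e (y * z)) = φ (e y) * φ (e z)
        rw [he_mul, map_mul]
      · show ‖φ (e y)‖ ≤ p y
        calc ‖φ (e y)‖ ≤ ‖e y‖ :=
              spectrum.norm_le_norm_of_mem (WeakDual.CharacterSpace.apply_mem_spectrum φ _)
          _ = p y := he_norm y
      · show ‖φ c‖ = p x
        rw [hφ, hznorm']
  · refine Real.sSup_le ?_ (pnonneg x)
    rintro w ⟨f, hf, rfl⟩
    exact hf.2.2.2 x
end
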